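/- arXiv:2003.06682 — 7 statements merged into one kernel-verified Lean document; each statement's English description precedes it below -/
import Mathlib

section
/- Let C ⊂ ℝ³ be a convex body. Then the set Ext C \ closure(Sing C) has no isolated points: for every ξ in this set and every ε > 0, the punctured ball B_ε(ξ) \ {ξ} contains another point of Ext C \ closure(Sing C). -/
open Set Metric
open scoped RealInnerProductSpace

noncomputable section

/-- The space `ℝ³`. -/
abbrev E3 : Type := EuclideanSpace ℝ (Fin 3)

/-- A convex body in `ℝ³`: a compact convex set with nonempty interior. -/
def IsConvexBody (C : Set E3) : Prop :=
  IsCompact C ∧ Convex ℝ C ∧ (interior C).Nonempty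

/-- `n` is an outward unit normal to the set `C` at the point `ξ`. -/
def IsOutwardNormal (C : Set E3) (ξ n : E3) : Prop :=
  ‖n‖ = 1 ∧ ∀ x ∈ C, (inner ℝ (x - ξ) n : ℝ) ≤ 0

/-- The singular points of the boundary of `C`: boundary points with at least two distinct
outward unit normals. -/
def SingPts (C : Set E3) : Set E3 :=
  {ξ | ξ ∈ frontier C ∧
    ∃ n₁ n₂ : E3, n₁ ≠ n₂ ∧ IsOutwardNormal C ξ n₁ ∧ IsOutwardNormal C ξ n₂}

lemma isCompact_convexHull_E3 {s : Set E3} (hs : IsCompact s) :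
    IsCompact (convexHull ℝ s) := by
  classical
  rcases s.eq_empty_or_nonempty with rfl | ⟨a, ha⟩
  · simpa using isCompact_empty
  have hD : IsCompact ((stdSimplex ℝ (Fin 4)) ×ˢ (Set.univ.pi fun _ : Fin 4 => s)) :=
    (isCompact_stdSimplex (𝕜 := ℝ) (ι := Fin 4)).prod (isCompact_univ_pi fun _ => hs)
  have hf : Continuous fun p : (Fin 4 → ℝ) × (Fin 4 → E3) => ∑ i, p.1 i • p.2 i := by
    refine continuous_finset_sum _ fun i _ => ?_
    exact ((continuous_apply i).comp continuous_fst).smul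
      ((continuous_apply i).comp continuous_snd)
  have himg := hD.image hf
  have heq : convexHull ℝ s =
      (fun p : (Fin 4 → ℝ) × (Fin 4 → E3) => ∑ i, p.1 i • p.2 i) ''
        ((stdSimplex ℝ (Fin 4)) ×ˢ (Set.univ.pi fun _ : Fin 4 => s)) := by
    apply Subset.antisymm
    · intro x hx
      obtain ⟨ι, hι, z, w, hz, hai, hwpos, hw1, hxx⟩ :=
        eq_pos_convex_span_of_mem_convexHull hx
      have hcard : Fintype.card ι ≤ 4 := by
        have h1 := hai.card_le_finrank_succ
        have h2 : Module.finrank ℝ (vectorSpan ℝ (Set.range z)) ≤ 3 := by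
          have := Submodule.finrank_le (vectorSpan ℝ (Set.range z))
          simpa [finrank_euclideanSpace] using this
        omega
      obtain ⟨e⟩ : Nonempty (ι ↪ Fin 4) := by
        apply Function.Embedding.nonempty_of_card_le
        simpa using hcard
      obtain ⟨w', hw'app, hw'0⟩ :
          ∃ w' : Fin 4 → ℝ, (∀ i, w' (e i) = w i) ∧ ∀ j, (¬∃ i, e i = j) → w' j = 0 :=
        ⟨Function.extend e w 0, fun i => e.injective.extend_apply _ _ _,
          fun j hj => Function.extend_apply' _ _ _ hj⟩
      obtain ⟨z', hz'app, hz'0⟩ :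
          ∃ z' : Fin 4 → E3, (∀ i, z' (e i) = z i) ∧ ∀ j, (¬∃ i, e i = j) → z' j = a :=
        ⟨Function.extend e z (fun _ => a), fun i => e.injective.extend_apply _ _ _,
          fun j hj => Function.extend_apply' _ _ _ hj⟩
      have hsum : ∀ {M : Type} [AddCommMonoid M] (F : Fin 4 → M),
          (∀ j, (¬ ∃ i, e i = j) → F j = 0) → ∑ j, F j = ∑ i, F (e i) := by
        intro M _ F hF
        have h1 : ∑ i : ι, F (e i) = ∑ j ∈ Finset.univ.image e, F j :=
          (Finset.sum_image (fun i _ j _ h => e.injective h)).symm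
        rw [h1]
        refine (Finset.sum_subset (Finset.subset_univ _) ?_).symm
        intro j _ hj
        apply hF
        simp only [Finset.mem_image, Finset.mem_univ, true_and] at hj
        exact fun ⟨i, hi⟩ => hj ⟨i, hi⟩
      have hw'nonneg : ∀ j, 0 ≤ w' j := by
        intro j
        rcases em (∃ i, e i = j) with ⟨i, rfl⟩ | hj
        · rw [hw'app]; exact (hwpos i).le
        · rw [hw'0 j hj]
      have hw'sum : ∑ j, w' j = 1 := by
        rw [hsum w' hw'0]
        simp only [hw'app]
        exact hw1
      have hz'mem : ∀ j, z' j ∈ s := by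
        intro j
        rcases em (∃ i, e i = j) with ⟨i, rfl⟩ | hj
        · rw [hz'app]; exact hz ⟨i, rfl⟩
        · rw [hz'0 j hj]; exact ha
      have hxsum : ∑ j, w' j • z' j = x := by
        rw [hsum (fun j => w' j • z' j) (fun j hj => by show w' j • z' j = 0; rw [hw'0 j hj]; simp)]
        simp only [hw'app, hz'app]
        exact hxx
      exact ⟨(w', z'), ⟨⟨hw'nonneg, hw'sum⟩, fun j _ => hz'mem j⟩, hxsum⟩
    · rintro x ⟨⟨w, z⟩, ⟨hw, hz⟩, rfl⟩
      exact (convex_convexHull ℝ s).sum_mem (fun i _ => hw.1 i) hw.2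
        (fun i _ => subset_convexHull ℝ s (hz i (Set.mem_univ i)))
  rw [heq]; exact himg

lemma unit_perp (v : E3) (hv : v ≠ 0) : ∃ w : E3, ‖w‖ = 1 ∧ (inner ℝ (v) (w) : ℝ) = 0 := by
  have hspan : (ℝ ∙ v)ᗮ ≠ ⊥ := by
    intro hbot
    have htop : (ℝ ∙ v) = ⊤ := Submodule.orthogonal_eq_bot_iff.mp hbot
    have h1 : Module.finrank ℝ (ℝ ∙ v) = 1 := finrank_span_singleton hv
    rw [htop, finrank_top] at h1
    have h3 : Module.finrank ℝ E3 = 3 := by simp [finrank_euclideanSpace]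
    omega
  obtain ⟨w₀, hw₀mem, hw₀ne⟩ := (Submodule.ne_bot_iff _).mp hspan
  have hw₀ : (inner ℝ (v) (w₀) : ℝ) = 0 :=
    (Submodule.mem_orthogonal _ _).mp hw₀mem v (Submodule.mem_span_singleton_self v)
  have hw₀norm : (0:ℝ) < ‖w₀‖ := norm_pos_iff.mpr hw₀ne
  refine ⟨‖w₀‖⁻¹ • w₀, ?_, ?_⟩
  · rw [norm_smul, norm_inv, norm_norm, inv_mul_cancel₀ hw₀norm.ne']
  · rw [real_inner_smul_right, hw₀, mul_zero]

lemma perturb_unit (u₀ w : E3) (hu₀ : ‖u₀‖ = 1) (hwnorm : ‖w‖ = 1)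
    (hu₀w : (inner ℝ (u₀) (w) : ℝ) = 0) (ρ : ℝ) (hρpos : 0 < ρ) :
    ∃ n₂ : E3, ‖n₂‖ = 1 ∧ ‖n₂ - u₀‖ ≤ ρ ∧ u₀ ≠ n₂ := by
  set t := min (ρ/2) 1 with ht
  have htpos : 0 < t := lt_min (by positivity) one_pos
  have ht1 : t ≤ 1 := min_le_right _ _
  have htρ : 2*t ≤ ρ := by
    have := min_le_left (ρ/2) 1
    rw [ht]; linarith
  clear_value t
  have hmsq : ‖u₀ + t • w‖^2 = 1 + t^2 := by
    rw [norm_add_sq_real, real_inner_smul_right, hu₀w, norm_smul, hu₀, hwnorm,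
      Real.norm_eq_abs, abs_of_pos htpos]
    ring
  obtain ⟨c, hc⟩ : ∃ c : ℝ, c = ‖u₀ + t • w‖ := ⟨_, rfl⟩
  have hcsq : c^2 = 1 + t^2 := by rw [hc]; exact hmsq
  have hcnn : 0 ≤ c := hc ▸ norm_nonneg _
  have hm1 : 1 ≤ c := by nlinarith [sq_nonneg t]
  have hmpos : (0:ℝ) < c := lt_of_lt_of_le one_pos hm1
  have hmle : c ≤ 1 + t := by nlinarith
  have hinv1 : c⁻¹ * c = 1 := inv_mul_cancel₀ hmpos.ne'
  have hinvle : c⁻¹ ≤ 1 := by nlinarith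
  have hinvpos : 0 < c⁻¹ := by positivity
  refine ⟨c⁻¹ • (u₀ + t • w), ?_, ?_, ?_⟩
  · rw [norm_smul, ← hc, Real.norm_eq_abs, abs_of_pos (by positivity)]
    exact hinv1
  · have hdiff : c⁻¹ • (u₀ + t • w) - u₀ = (c⁻¹ - 1) • u₀ + (c⁻¹ * t) • w := by
      module
    rw [hdiff]
    have hb1 : ‖(c⁻¹ - 1) • u₀‖ = 1 - c⁻¹ := by
      rw [norm_smul, hu₀, mul_one, Real.norm_eq_abs, abs_of_nonpos (by linarith), neg_sub]
    have hb2 : ‖(c⁻¹ * t) • w‖ = c⁻¹ * t := by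
      rw [norm_smul, hwnorm, mul_one, Real.norm_eq_abs, abs_of_pos (by positivity)]
    calc ‖(c⁻¹ - 1) • u₀ + (c⁻¹ * t) • w‖
        ≤ ‖(c⁻¹ - 1) • u₀‖ + ‖(c⁻¹ * t) • w‖ := norm_add_le _ _
      _ = (1 - c⁻¹) + c⁻¹ * t := by rw [hb1, hb2]
      _ ≤ ρ := by nlinarith
  · intro heq
    have h1 : (inner ℝ (c⁻¹ • (u₀ + t • w)) (w) : ℝ) = c⁻¹ * t := by
      rw [real_inner_smul_left, inner_add_left, hu₀w,
        real_inner_smul_left, real_inner_self_eq_norm_sq, hwnorm]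
      ring
    rw [← heq, hu₀w] at h1
    nlinarith


/-- The set `Ext C \ closure(Sing C)` has no isolated points. -/
theorem stmt4 (C : Set E3) (hC : IsConvexBody C)
    (ξ : E3) (hξ : ξ ∈ Set.extremePoints ℝ C \ closure (SingPts C))
    (ε : ℝ) (hε : 0 < ε) :
    ∃ η ∈ Set.extremePoints ℝ C \ closure (SingPts C),
      η ∈ Metric.ball ξ ε ∧ η ≠ ξ := by
  classical
  obtain ⟨hξext, hξns⟩ := hξ
  obtain ⟨hCcomp, hCconv, hCint⟩ := hC
  by_contra hcon
  push_neg at hcon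
  have hξC : ξ ∈ C := extremePoints_subset hξext
  -- ξ is not interior, hence on the frontier
  have hξfr : ξ ∈ frontier C := by
    rw [hCcomp.isClosed.frontier_eq]
    refine ⟨hξC, fun hint => ?_⟩
    obtain ⟨σ, hσ, hσball⟩ := Metric.isOpen_iff.mp isOpen_interior ξ hint
    set d : E3 := EuclideanSpace.single (0 : Fin 3) (σ/2) with hd
    have hdnorm : ‖d‖ = σ/2 := by
      rw [hd, EuclideanSpace.norm_single]
      rw [Real.norm_eq_abs, abs_of_pos (by linarith)]
    have hmem : ∀ c : E3, ‖c‖ = σ/2 → ξ + c ∈ C := by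
      intro c hc
      refine interior_subset (hσball ?_)
      rw [mem_ball_iff_norm, add_sub_cancel_left, hc]
      linarith
    have h1 : ξ - d ∈ C := by
      have := hmem (-d) (by rwa [norm_neg])
      rwa [← sub_eq_add_neg] at this
    have h2 : ξ + d ∈ C := hmem d hdnorm
    have hseg : ξ ∈ openSegment ℝ (ξ - d) (ξ + d) := by
      refine ⟨1/2, 1/2, by norm_num, by norm_num, by norm_num, ?_⟩
      module
    have := hξext.2 h1 h2 hseg
    have hdz : d = 0 := by
      have h4 : d = ξ - (ξ - d) := by abel
      rw [h4, this, sub_self]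
    rw [hdz, norm_zero] at hdnorm
    linarith
  -- radius avoiding the singular closure and ε
  obtain ⟨ε₁, hε₁, hball₁⟩ := Metric.isOpen_iff.mp isClosed_closure.isOpen_compl ξ hξns
  set r : ℝ := min ε ε₁ / 2 with hr
  have hminpos : 0 < min ε ε₁ := lt_min hε hε₁
  have hrpos : 0 < r := by positivity
  have hrε : r < ε := by
    have := min_le_left ε ε₁
    rw [hr]; linarith
  have hrε₁ : r ≤ ε₁ := by
    have := min_le_right ε ε₁
    rw [hr]; linarith
  have hballsub : ball ξ r ⊆ (closure (SingPts C))ᶜ :=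
    (ball_subset_ball hrε₁).trans hball₁
  have huniq : ∀ η ∈ extremePoints ℝ C, η ∈ ball ξ r → η = ξ := by
    intro η hη hmem
    exact hcon η ⟨hη, hballsub hmem⟩ (ball_subset_ball hrε.le hmem)
  set A := closure (extremePoints ℝ C) \ ball ξ r with hA
  have hAclosed : IsClosed A := isClosed_closure.sdiff isOpen_ball
  have hAsubC : A ⊆ C := fun y hy =>
    (closure_minimal extremePoints_subset hCcomp.isClosed) hy.1
  have hAcomp : IsCompact A := hCcomp.of_isClosed_subset hAclosed hAsubC
  have hExtsub : extremePoints ℝ C ⊆ insert ξ A := by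
    intro η hη
    rcases em (η ∈ ball ξ r) with hmem | hmem
    · exact Or.inl (huniq η hη hmem)
    · exact Or.inr ⟨subset_closure hη, hmem⟩
  rcases A.eq_empty_or_nonempty with hAe | hAne
  · -- degenerate: C would be a single point
    have h1 : extremePoints ℝ C ⊆ {ξ} := by
      intro η hη
      rcases hExtsub hη with h | h
      · exact h
      · rw [hAe] at h; exact absurd h (notMem_empty η)
    have h2 : C ⊆ {ξ} := by
      rw [← closure_convexHull_extremePoints hCcomp hCconv]
      exact closure_minimal (convexHull_min h1 (convex_singleton ξ)) isClosed_singleton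
    obtain ⟨y, hy⟩ := hCint
    obtain ⟨σ, hσ, hσball⟩ := Metric.isOpen_iff.mp isOpen_interior y hy
    set d : E3 := EuclideanSpace.single (0 : Fin 3) (σ/2) with hd
    have hdnorm : ‖d‖ = σ/2 := by
      rw [hd, EuclideanSpace.norm_single]
      rw [Real.norm_eq_abs, abs_of_pos (by linarith)]
    have hyd : y + d ∈ C := by
      refine interior_subset (hσball ?_)
      rw [mem_ball_iff_norm, add_sub_cancel_left, hdnorm]
      linarith
    have hy1 : y = ξ := h2 (interior_subset hy)
    have hy2 : y + d = ξ := h2 hyd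
    have hdz : d = 0 := by
      have : y + d = y := by rw [hy2, hy1]
      have h4 : d = (y + d) - y := by abel
      rw [h4, this, sub_self]
    rw [hdz, norm_zero] at hdnorm
    linarith
  · -- main case
    set K := convexHull ℝ A with hK
    have hKcomp : IsCompact K := isCompact_convexHull_E3 hAcomp
    have hKconv : Convex ℝ K := convex_convexHull ℝ A
    have hKsubC : K ⊆ C := convexHull_min hAsubC hCconv
    have hξK : ξ ∉ K := by
      intro hk
      have hxt : ξ ∈ extremePoints ℝ K :=
        ⟨hk, fun x₁ h1 x₂ h2 hseg => hξext.2 (hKsubC h1) (hKsubC h2) hseg⟩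
      exact (extremePoints_convexHull_subset hxt).2 (mem_ball_self hrpos)
    have hCM : C ⊆ convexHull ℝ (insert ξ A) := by
      rw [← closure_convexHull_extremePoints hCcomp hCconv]
      exact closure_minimal (convexHull_mono hExtsub)
        (isCompact_convexHull_E3 (hAcomp.insert ξ)).isClosed
    have hrep : ∀ x ∈ C, ∃ k ∈ K, x ∈ segment ℝ ξ k := by
      intro x hx
      have h := hCM hx
      rw [convexHull_insert hAne, mem_convexJoin] at h
      obtain ⟨aa, haa, b, hb, hseg⟩ := h
      rw [mem_singleton_iff] at haa
      exact ⟨b, hb, haa ▸ hseg⟩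
    -- separation
    obtain ⟨f, u, hfK, hfξ⟩ :=
      geometric_hahn_banach_closed_point hKconv hKcomp.isClosed hξK
    set v := (InnerProductSpace.toDual ℝ E3).symm f with hv
    have hvx : ∀ x : E3, (inner ℝ (v) (x) : ℝ) = f x := fun x => InnerProductSpace.toDual_symm_apply
    set δ := f ξ - u with hδ
    have hδpos : 0 < δ := by rw [hδ]; linarith
    have hKne : K.Nonempty := hAne.mono (subset_convexHull ℝ A)
    have hvne : v ≠ 0 := by
      intro h0
      obtain ⟨k, hk⟩ := hKne
      have h1 : f k = 0 := by rw [← hvx k, h0, inner_zero_left]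
      have h2 : f ξ = 0 := by rw [← hvx ξ, h0, inner_zero_left]
      have := hfK k hk
      linarith
    obtain ⟨R₀, hR₀⟩ := hKcomp.isBounded.subset_closedBall ξ
    set R := max R₀ 1 with hR
    have hRpos : (0:ℝ) < R := lt_of_lt_of_le one_pos (le_max_right _ _)
    have hdist : ∀ k ∈ K, ‖k - ξ‖ ≤ R := by
      intro k hk
      have := hR₀ hk
      rw [mem_closedBall, dist_eq_norm] at this
      exact this.trans (le_max_left _ _)
    have hinner : ∀ k ∈ K, (inner ℝ (v) (k - ξ) : ℝ) ≤ -δ := by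
      intro k hk
      rw [inner_sub_right, hvx, hvx]
      have := hfK k hk
      rw [hδ]; linarith
    have hvnorm : (0:ℝ) < ‖v‖ := norm_pos_iff.mpr hvne
    set u₀ : E3 := ‖v‖⁻¹ • v with hu₀def
    have hu₀ : ‖u₀‖ = 1 := by
      rw [hu₀def, norm_smul, norm_inv, norm_norm, inv_mul_cancel₀ hvnorm.ne']
    set ρ := δ / (R * ‖v‖) with hρ
    have hρpos : 0 < ρ := by positivity
    have hnormal : ∀ n : E3, ‖n‖ = 1 → ‖n - u₀‖ ≤ ρ → IsOutwardNormal C ξ n := by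
      intro n hn hnu
      refine ⟨hn, fun x hx => ?_⟩
      obtain ⟨k, hk, p, q, hp, hq, hpq, hx'⟩ := hrep x hx
      have hxe : x - ξ = q • (k - ξ) := by
        have hp1 : p = 1 - q := by linarith
        rw [← hx', hp1]
        module
      rw [hxe, real_inner_smul_left]
      have hkn : (inner ℝ (k - ξ) (n) : ℝ) ≤ 0 := by
        have h1 : (inner ℝ (k - ξ) (u₀) : ℝ) ≤ ‖v‖⁻¹ * (-δ) := by
          rw [hu₀def, real_inner_smul_right, real_inner_comm]
          exact mul_le_mul_of_nonneg_left (hinner k hk) (by positivity)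
        have h2 : (inner ℝ (k - ξ) (n - u₀) : ℝ) ≤ R * ρ :=
          (real_inner_le_norm _ _).trans
            (mul_le_mul (hdist k hk) hnu (norm_nonneg _) hRpos.le)
        rw [inner_sub_right] at h2
        have hRρ : R * ρ = δ / ‖v‖ := by
          rw [hρ]; field_simp
        have hid : ‖v‖⁻¹ * (-δ) = -(δ / ‖v‖) := by field_simp
        linarith
      exact mul_nonpos_of_nonneg_of_nonpos hq hkn
    -- two distinct normals
    obtain ⟨w, hwnorm, hwv⟩ := unit_perp v hvne
    have hu₀w : (inner ℝ (u₀) (w) : ℝ) = 0 := by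
      rw [hu₀def, real_inner_smul_left, hwv, mul_zero]
    obtain ⟨n₂, hn₂norm, hn₂close, hn₂ne⟩ := perturb_unit u₀ w hu₀ hwnorm hu₀w ρ hρpos
    have hsing : ξ ∈ SingPts C := by
      refine ⟨hξfr, u₀, n₂, hn₂ne, hnormal u₀ hu₀ (by simp [hρpos.le]), hnormal n₂ hn₂norm hn₂close⟩
    exact hξns (subset_closure hsing)
end
end

section
/- Let C ⊂ ℝ³ be a convex body and let {O₁, O₂, …} be a finite or countable set of points lying outside C such that for all i ≠ j the open segment (O_i, O_j) intersects C. Let C̃ = Conv(C ∪ {O₁, O₂, …}). Then C̃ = ⋃_i Conv(C ∪ {O_i}). -/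
open Set Metric

noncomputable section

private lemma comb_mem {C : Set E3} {Oi a b p : E3}
    (ha : a ∈ C) (hb : b ∈ C) (hp : p ∈ C) {c0 c1 c2 c3 : ℝ}
    (h0 : 0 ≤ c0) (h1 : 0 ≤ c1) (h2 : 0 ≤ c2) (h3 : 0 ≤ c3)
    (hsum : c0 + c1 + c2 + c3 = 1) :
    c0 • a + c1 • b + c2 • p + c3 • Oi ∈ convexHull ℝ (C ∪ {Oi}) := by
  have hK : Convex ℝ (convexHull ℝ (C ∪ {Oi})) := convex_convexHull ℝ _
  have hmem : ∀ q ∈ C ∪ {Oi}, q ∈ convexHull ℝ (C ∪ {Oi}) :=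
    fun q hq => subset_convexHull ℝ _ hq
  have h := hK.sum_mem (t := Finset.univ) (w := ![c0,c1,c2,c3]) (z := ![a,b,p,Oi])
    (fun i _ => by fin_cases i <;> simpa)
    (by rw [Fin.sum_univ_four]; simpa using hsum)
    (fun i _ => by
      fin_cases i
      · exact hmem _ (Or.inl ha)
      · exact hmem _ (Or.inl hb)
      · exact hmem _ (Or.inl hp)
      · exact hmem _ (Or.inr rfl))
  simpa [Fin.sum_univ_four] using h

/-- If `{O_i}` is a (nonempty) finite or countable set of points outside the convex body `C`
such that each open segment `(O_i, O_j)` (for `i ≠ j`) meets `C`, then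
`Conv(C ∪ {O₁, O₂, …}) = ⋃_i Conv(C ∪ {O_i})`. -/
theorem stmt6 {ι : Type} [Countable ι] [Nonempty ι]
    (C : Set E3) (hC : IsConvexBody C)
    (O : ι → E3) (hO : ∀ i, O i ∉ C)
    (hseg : ∀ i j, i ≠ j → (openSegment ℝ (O i) (O j) ∩ C).Nonempty) :
    convexHull ℝ (C ∪ Set.range O) = ⋃ i, convexHull ℝ (C ∪ {O i}) := by
  obtain ⟨hcomp, hconv, hint⟩ := hC
  have hCne : C.Nonempty := hint.mono interior_subset
  have key : ∀ (k : ι) (x : E3), x ∈ convexHull ℝ (C ∪ {O k}) →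
      ∃ a ∈ C, ∃ s : ℝ, 0 ≤ s ∧ ∃ s' : ℝ, 0 ≤ s' ∧ s + s' = 1 ∧ x = s • O k + s' • a := by
    intro k x hx
    rw [union_singleton, convexHull_insert hCne, hconv.convexHull_eq, mem_convexJoin] at hx
    obtain ⟨q', hq', a, ha, hxseg⟩ := hx
    rw [mem_singleton_iff] at hq'
    subst hq'
    obtain ⟨s, s', hs, hs', hss, hxe⟩ := hxseg
    exact ⟨a, ha, s, hs, s', hs', hss, hxe.symm⟩
  apply Subset.antisymm
  · apply convexHull_min
    · rintro x (hx | ⟨i, rfl⟩)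
      · exact mem_iUnion.2 ⟨Classical.arbitrary ι, subset_convexHull ℝ _ (Or.inl hx)⟩
      · exact mem_iUnion.2 ⟨i, subset_convexHull ℝ _ (Or.inr rfl)⟩
    · intro x hx y hy u v hu hv huv
      obtain ⟨i, hxi⟩ := mem_iUnion.1 hx
      obtain ⟨j, hyj⟩ := mem_iUnion.1 hy
      by_cases hij : i = j
      · subst hij
        exact mem_iUnion.2 ⟨i, (convex_convexHull ℝ _) hxi hyj hu hv huv⟩
      · obtain ⟨p, hpseg, hpC⟩ := hseg i j hij
        obtain ⟨l1, l2, hl1, hl2, hl, hpe⟩ := hpseg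
        obtain ⟨a, ha, s, hs, s', hs', hss, hxe⟩ := key i x hxi
        obtain ⟨b, hb, t, ht, t', ht', htt, hye⟩ := key j y hyj
        -- z = u•x+v•y
        by_cases hcase : v * t * l1 ≤ u * s * l2
        · refine mem_iUnion.2 ⟨i, ?_⟩
          have hz : u • x + v • y =
              (u*s') • a + (v*t') • b + (v*t/l2) • p + (u*s - v*t*l1/l2) • (O i) := by
            rw [hxe, hye, ← hpe]
            match_scalars <;> field_simp <;> ring
          rw [hz]
          exact comb_mem ha hb hpC (mul_nonneg hu hs') (mul_nonneg hv ht')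
            (div_nonneg (mul_nonneg hv ht) hl2.le)
            (by rw [sub_nonneg, div_le_iff₀ hl2]; linarith)
            (by field_simp; linear_combination u*l2*hss + v*l2*htt - v*t*hl + l2*huv)
        · push_neg at hcase
          refine mem_iUnion.2 ⟨j, ?_⟩
          have hz : u • x + v • y =
              (u*s') • a + (v*t') • b + (u*s/l1) • p + (v*t - u*s*l2/l1) • (O j) := by
            rw [hxe, hye, ← hpe]
            match_scalars <;> field_simp <;> ring
          rw [hz]
          exact comb_mem ha hb hpC (mul_nonneg hu hs') (mul_nonneg hv ht')
            (div_nonneg (mul_nonneg hu hs) hl1.le)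
            (by rw [sub_nonneg, div_le_iff₀ hl1]; linarith)
            (by field_simp; linear_combination u*l1*hss - u*s*hl + v*l1*htt + l1*huv)
  · refine iUnion_subset fun i => convexHull_mono (union_subset_union_right C ?_)
    rintro x rfl
    exact ⟨i, rfl⟩
end
end

section
/- Let C ⊂ ℝ³ be a convex body and let O₁, …, O_m be finitely many points lying outside C such that for all i ≠ j the open segment (O_i, O_j) intersects C. Let C̃ = Conv(C ∪ {O₁, …, O_m}). Suppose ξ ∈ Ext C \ closure(Sing C) and for every i the open segment (O_i, ξ) intersects C. Then ξ ∈ Ext C̃ \ closure(Sing C̃). -/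
open Set Metric

noncomputable section

/-- Convex combination of three points of a convex set lies in the set. -/
private lemma comb3 {T : Set E3} (hT : Convex ℝ T) {p₁ p₂ p₃ : E3}
    (h₁ : p₁ ∈ T) (h₂ : p₂ ∈ T) (h₃ : p₃ ∈ T) {α β γ : ℝ}
    (ha : 0 ≤ α) (hb : 0 ≤ β) (hc : 0 ≤ γ) (habc : α + β + γ = 1) :
    α • p₁ + β • p₂ + γ • p₃ ∈ T := by
  rcases eq_or_lt_of_le (by positivity : (0:ℝ) ≤ β + γ) with h | h
  · have hβ : β = 0 := by linarith
    have hγ : γ = 0 := by linarith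
    have hα : α = 1 := by linarith
    simpa [hβ, hγ, hα] using h₁
  · have hne : β + γ ≠ 0 := ne_of_gt h
    have hmem : (β/(β+γ)) • p₂ + (γ/(β+γ)) • p₃ ∈ T :=
      hT h₂ h₃ (by positivity) (by positivity) (by field_simp)
    have hmain := hT h₁ hmem ha (le_of_lt h) (by linarith)
    rw [smul_add, smul_smul, smul_smul] at hmain
    have e1 : (β+γ) * (β/(β+γ)) = β := by field_simp
    have e2 : (β+γ) * (γ/(β+γ)) = γ := by field_simp
    rw [e1, e2] at hmain
    rwa [add_assoc]

/-- Divide a scaled convex-combination identity. -/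
private lemma inv_comb {M : ℝ} (hM : M ≠ 0) {x y z : E3} {p q : ℝ}
    (h : M • z = p • x + q • y) : (p/M) • x + (q/M) • y = z := by
  rw [div_eq_inv_mul, div_eq_inv_mul, mul_smul, mul_smul, ← smul_add, ← h, smul_smul,
    inv_mul_cancel₀ hM, one_smul]

/-- Divide a combination identity on both sides. -/
private lemma inv_comb2 {M : ℝ} {x y x' y' : E3} {p q p' q' : ℝ}
    (h : p • x + q • y = p' • x' + q' • y') :
    (p/M) • x + (q/M) • y = (p'/M) • x' + (q'/M) • y' := by
  rw [div_eq_inv_mul, div_eq_inv_mul, div_eq_inv_mul, div_eq_inv_mul,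
    mul_smul, mul_smul, mul_smul, mul_smul, ← smul_add, ← smul_add, h]

/-- The key decomposition: when each open segment `(O i, O j)` meets `C`, the convex hull of
`C ∪ range O` is the union of the "single cap" hulls. -/
private lemma hull_union_split {m : ℕ} (C : Set E3) (hCconv : Convex ℝ C) (hCne : C.Nonempty)
    (O : Fin m → E3)
    (hseg : ∀ i j, i ≠ j → (openSegment ℝ (O i) (O j) ∩ C).Nonempty) :
    convexHull ℝ (C ∪ Set.range O) ⊆ C ∪ ⋃ i, convexHull ℝ (insert (O i) C) := by
  have key : ∀ s : Finset (Fin m), convexHull ℝ (C ∪ O '' ↑s) ⊆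
      C ∪ ⋃ i ∈ s, convexHull ℝ (insert (O i) C) := by
    intro s
    induction s using Finset.induction_on with
    | empty => simp [hCconv.convexHull_eq]
    | @insert j s hj ih =>
      have h1 : (C ∪ O '' ↑(insert j s)) = insert (O j) (C ∪ O '' ↑s) := by
        rw [Finset.coe_insert, Set.image_insert_eq, Set.union_insert]
      rw [h1, convexHull_insert hCne.inl]
      intro x hx
      rw [mem_convexJoin] at hx
      obtain ⟨w, hw, y, hy, hxseg⟩ := hx
      rw [mem_singleton_iff] at hw
      subst hw
      rcases ih hy with hyC | hyU
      · -- y ∈ C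
        have : x ∈ convexHull ℝ (insert (O j) C) :=
          (convex_convexHull ℝ _).segment_subset
            (subset_convexHull ℝ _ (mem_insert _ _))
            (subset_convexHull ℝ _ (mem_insert_of_mem _ hyC)) hxseg
        exact Or.inr (mem_iUnion₂.mpr ⟨j, Finset.mem_insert_self j s, this⟩)
      · obtain ⟨i, his, hyi⟩ := mem_iUnion₂.mp hyU
        rw [convexHull_insert hCne, hCconv.convexHull_eq, mem_convexJoin] at hyi
        obtain ⟨w', hw', c, hcC, hyseg⟩ := hyi
        rw [mem_singleton_iff] at hw'
        subst hw'
        have hij : i ≠ j := fun h => hj (h ▸ his)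
        obtain ⟨q, hqseg, hqC⟩ := hseg i j hij
        obtain ⟨a, b, ha, hb, hab, hxeq⟩ := hxseg
        obtain ⟨e, f, he, hf, hef, hyeq⟩ := hyseg
        obtain ⟨g, h, hg, hh, hgh, hqeq⟩ := hqseg
        have hb' : b = 1 - a := by linarith
        have hf' : f = 1 - e := by linarith
        have hh' : h = 1 - g := by linarith
        subst hb'; subst hf'; subst hh'
        have hh0 : (0:ℝ) < 1 - g := by linarith
        have hg0 : (0:ℝ) < g := hg
        by_cases hcmp : a * g ≤ (1-a) * e * (1-g)
        · -- x is a combination of O i, q, c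
          right
          refine mem_iUnion₂.mpr ⟨i, Finset.mem_insert_of_mem his, ?_⟩
          have hkey : ((1-a)*e*(1-g) - a*g) • O i + a • q + ((1-a)*(1-e)*(1-g)) • c
              = (1-g) • x := by
            rw [← hxeq, ← hyeq, ← hqeq]; module
          have hx' : x = ((1-g)⁻¹*((1-a)*e*(1-g) - a*g)) • O i + ((1-g)⁻¹*a) • q
              + ((1-g)⁻¹*((1-a)*(1-e)*(1-g))) • c := by
            have := congrArg (fun v => (1-g)⁻¹ • v) hkey
            simp only [smul_add, smul_smul] at this
            rw [inv_mul_cancel₀ (ne_of_gt hh0), one_smul] at this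
            exact this.symm
          rw [hx']
          refine comb3 (convex_convexHull ℝ _)
            (subset_convexHull ℝ _ (mem_insert _ _))
            (subset_convexHull ℝ _ (mem_insert_of_mem _ hqC))
            (subset_convexHull ℝ _ (mem_insert_of_mem _ hcC))
            (mul_nonneg (inv_nonneg.mpr hh0.le) (sub_nonneg.mpr hcmp))
            (mul_nonneg (inv_nonneg.mpr hh0.le) ha)
            (mul_nonneg (inv_nonneg.mpr hh0.le) (mul_nonneg (mul_nonneg hb hf) hh0.le))
            ?_
          have hsum' : ((1-a)*e*(1-g) - a*g) + a + ((1-a)*(1-e)*(1-g)) = 1-g := by ring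
          rw [← mul_add, ← mul_add, hsum', inv_mul_cancel₀ (ne_of_gt hh0)]
        · -- x is a combination of O j, q, c
          right
          push_neg at hcmp
          refine mem_iUnion₂.mpr ⟨j, Finset.mem_insert_self j s, ?_⟩
          have hkey : (a*g - (1-a)*e*(1-g)) • O j + ((1-a)*e) • q + ((1-a)*(1-e)*g) • c
              = g • x := by
            rw [← hxeq, ← hyeq, ← hqeq]; module
          have hx' : x = (g⁻¹*(a*g - (1-a)*e*(1-g))) • O j + (g⁻¹*((1-a)*e)) • q
              + (g⁻¹*((1-a)*(1-e)*g)) • c := by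
            have := congrArg (fun v => g⁻¹ • v) hkey
            simp only [smul_add, smul_smul] at this
            rw [inv_mul_cancel₀ (ne_of_gt hg0), one_smul] at this
            exact this.symm
          rw [hx']
          refine comb3 (convex_convexHull ℝ _)
            (subset_convexHull ℝ _ (mem_insert _ _))
            (subset_convexHull ℝ _ (mem_insert_of_mem _ hqC))
            (subset_convexHull ℝ _ (mem_insert_of_mem _ hcC))
            (mul_nonneg (inv_nonneg.mpr hg0.le) (sub_nonneg.mpr hcmp.le))
            (mul_nonneg (inv_nonneg.mpr hg0.le) (mul_nonneg hb he))
            (mul_nonneg (inv_nonneg.mpr hg0.le) (mul_nonneg (mul_nonneg hb hf) hg0.le))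
            ?_
          have hsum' : (a*g - (1-a)*e*(1-g)) + ((1-a)*e) + ((1-a)*(1-e)*g) = g := by ring
          rw [← mul_add, ← mul_add, hsum', inv_mul_cancel₀ (ne_of_gt hg0)]
  intro x hx
  have := key Finset.univ
  rw [Finset.coe_univ, Set.image_univ] at this
  rcases this hx with h | h
  · exact Or.inl h
  · obtain ⟨i, _, hi⟩ := mem_iUnion₂.mp h
    exact Or.inr (mem_iUnion.mpr ⟨i, hi⟩)

/-- Let `O₁, …, O_m` be finitely many points outside the convex body `C` such that each open
segment `(O_i, O_j)` (for `i ≠ j`) meets `C`, and let `C̃ = Conv(C ∪ {O₁, …, O_m})`.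
If `ξ ∈ Ext C \ closure(Sing C)` and every open segment `(O_i, ξ)` meets `C`, then
`ξ ∈ Ext C̃ \ closure(Sing C̃)`. -/
theorem stmt7 (m : ℕ) (C : Set E3) (hC : IsConvexBody C)
    (O : Fin m → E3) (hO : ∀ i, O i ∉ C)
    (hseg : ∀ i j, i ≠ j → (openSegment ℝ (O i) (O j) ∩ C).Nonempty)
    (ξ : E3) (hξ : ξ ∈ Set.extremePoints ℝ C \ closure (SingPts C))
    (hξseg : ∀ i, (openSegment ℝ (O i) ξ ∩ C).Nonempty) :
    ξ ∈ Set.extremePoints ℝ (convexHull ℝ (C ∪ Set.range O)) \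
        closure (SingPts (convexHull ℝ (C ∪ Set.range O))) := by
  obtain ⟨hCcomp, hCconv, hCint⟩ := hC
  have hCne : C.Nonempty := hCint.mono interior_subset
  obtain ⟨hξext, hξsing⟩ := hξ
  have hξC : ξ ∈ C := hξext.1
  have hξface := hξext.2
  set Ct := convexHull ℝ (C ∪ Set.range O) with hCtdef
  have hsubCt : C ⊆ Ct := (subset_union_left (t := Set.range O)).trans (subset_convexHull ℝ _)
  have hOCt : ∀ i, O i ∈ Ct := fun i => subset_convexHull ℝ _ (Or.inr ⟨i, rfl⟩)
  -- the points p i on the segments (O i, ξ) ∩ C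
  have hp : ∀ i, ∃ t u : ℝ, 0 < t ∧ 0 < u ∧ t + u = 1 ∧ t • O i + u • ξ ∈ C := by
    intro i
    obtain ⟨p, hpseg, hpC⟩ := hξseg i
    obtain ⟨t, u, ht, hu, htu, heq⟩ := hpseg
    exact ⟨t, u, ht, hu, htu, heq ▸ hpC⟩
  choose t u ht hu htu hpC using hp
  have hsplit := hull_union_split C hCconv hCne O hseg
  -- key triviality lemma : ξ can only lie trivially on a segment [O i, c]
  have hkey0 : ∀ i, ∀ a : ℝ, ∀ c ∈ C, 0 ≤ a → a ≤ 1 →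
      a • O i + (1-a) • c = ξ → a = 0 ∧ c = ξ := by
    intro i a c hcC ha ha1 heq
    rcases eq_or_lt_of_le ha with ha0 | hapos
    · refine ⟨ha0.symm, ?_⟩
      rw [← ha0] at heq
      simpa using heq
    · exfalso
      rcases eq_or_lt_of_le ha1 with ha1' | halt
      · -- a = 1 : ξ = O i ∈ C, contradiction
        apply hO i
        rw [ha1'] at heq  -- wrong direction? a = 1
        simp at heq
        rwa [heq]
      · -- 0 < a < 1 : ξ ∈ openSegment (p i) c
        have hu' : u i = 1 - t i := by linarith [htu i]
        have h1a : (0:ℝ) < 1 - a := by linarith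
        have hM : 0 < a + t i * (1-a) := by nlinarith [ht i]
        have hV : (a + t i * (1-a)) • ξ = a • (t i • O i + u i • ξ) + (t i * (1-a)) • c := by
          rw [hu', ← heq]; module
        have hsegmem : ξ ∈ openSegment ℝ (t i • O i + u i • ξ) c :=
          ⟨a / (a + t i * (1-a)), (t i * (1-a)) / (a + t i * (1-a)),
            div_pos hapos hM, div_pos (mul_pos (ht i) h1a) hM, by field_simp,
            inv_comb (ne_of_gt hM) hV⟩
        have := hξface (hpC i) hcC hsegmem
        -- p i = ξ forces O i = ξ ∈ C
        apply hO i
        have h1 : t i • O i + u i • ξ = ξ := this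
        have h2 : t i • O i = t i • ξ := by
          have hu' : u i = 1 - t i := by linarith [htu i]
          rw [hu'] at h1
          linear_combination (norm := module) h1
        have := smul_right_injective E3 (ne_of_gt (ht i)) h2
        rwa [this]
  -- Claim R : every point of Ct sees a point of C on the segment towards ξ
  have hR : ∀ x ∈ Ct, ∃ μ : ℝ, 0 < μ ∧ μ ≤ 1 ∧ μ • x + (1 - μ) • ξ ∈ C := by
    intro x hx
    rcases hsplit hx with hxC | hxU
    · exact ⟨1, one_pos, le_refl 1, by simpa using hxC⟩
    · obtain ⟨i, hxi⟩ := mem_iUnion.mp hxU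
      rw [convexHull_insert hCne, hCconv.convexHull_eq, mem_convexJoin] at hxi
      obtain ⟨w, hw, c, hcC, hxseg⟩ := hxi
      rw [mem_singleton_iff] at hw
      subst hw
      obtain ⟨a, b, ha, hb, hab, hxeq⟩ := hxseg
      have hb' : b = 1 - a := by linarith
      subst hb'
      have hK : 0 < t i + a * u i :=
        add_pos_of_pos_of_nonneg (ht i) (mul_nonneg ha (hu i).le)
      have hKne : t i + a * u i ≠ 0 := ne_of_gt hK
      refine ⟨t i / (t i + a * u i), div_pos (ht i) hK, ?_, ?_⟩
      · rw [div_le_one hK]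
        nlinarith [mul_nonneg ha (le_of_lt (hu i))]
      · have hV : (t i) • x + (a * u i) • ξ
            = a • (t i • O i + u i • ξ) + (t i * (1-a)) • c := by
          rw [← hxeq]; module
        have h2 : 1 - t i / (t i + a * u i) = (a * u i) / (t i + a * u i) := by
          field_simp; ring
        have hcomb : (t i / (t i + a * u i)) • x + (1 - t i / (t i + a * u i)) • ξ
            = (a / (t i + a * u i)) • (t i • O i + u i • ξ)
              + ((t i * (1-a)) / (t i + a * u i)) • c := by
          rw [h2]; exact inv_comb2 hV
        rw [hcomb]
        have hsum : a / (t i + a * u i) + (t i * (1-a)) / (t i + a * u i) = 1 := by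
          rw [← add_div, div_eq_one_iff_eq hKne]
          have hu' : u i = 1 - t i := by linarith [htu i]
          rw [hu']; ring
        exact hCconv (hpC i) hcC (div_nonneg ha hK.le)
          (div_nonneg (mul_nonneg (ht i).le hb) hK.le) hsum
  constructor
  · -- ξ is an extreme point of Ct
    rw [mem_extremePoints]
    refine ⟨hsubCt hξC, ?_⟩
    intro x₁ hx₁ x₂ hx₂ hsegm
    obtain ⟨θ₁, θ₂, hθ₁, hθ₂, hθsum, hθeq⟩ := hsegm
    obtain ⟨μ₁, hμ₁, hμ₁le, hc₁⟩ := hR x₁ hx₁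
    obtain ⟨μ₂, hμ₂, hμ₂le, hc₂⟩ := hR x₂ hx₂
    have hM : 0 < θ₁ * μ₂ + θ₂ * μ₁ := by
      have := mul_pos hθ₁ hμ₂; have := mul_pos hθ₂ hμ₁; linarith
    have hV2 : (θ₁*μ₂ + θ₂*μ₁) • ξ
        = (θ₁*μ₂) • (μ₁ • x₁ + (1-μ₁) • ξ) + (θ₂*μ₁) • (μ₂ • x₂ + (1-μ₂) • ξ) := by
      have h2 : θ₂ = 1 - θ₁ := by linarith
      subst h2
      rw [← hθeq]
      module
    have hmem : ξ ∈ openSegment ℝ (μ₁ • x₁ + (1-μ₁) • ξ) (μ₂ • x₂ + (1-μ₂) • ξ) := by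
      exact ⟨(θ₁*μ₂) / (θ₁*μ₂ + θ₂*μ₁), (θ₂*μ₁) / (θ₁*μ₂ + θ₂*μ₁),
        div_pos (mul_pos hθ₁ hμ₂) hM, div_pos (mul_pos hθ₂ hμ₁) hM, by field_simp,
        inv_comb (ne_of_gt hM) hV2⟩
    have he₁ := hξface hc₁ hc₂ hmem
    have he₂ := hξface hc₂ hc₁ (by rw [openSegment_symm]; exact hmem)
    constructor
    · have h2 : μ₁ • x₁ = μ₁ • ξ := by linear_combination (norm := module) he₁
      exact smul_right_injective E3 (ne_of_gt hμ₁) h2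
    · have h2 : μ₂ • x₂ = μ₂ • ξ := by linear_combination (norm := module) he₂
      exact smul_right_injective E3 (ne_of_gt hμ₂) h2
  · -- ξ is not in the closure of the singular points of Ct
    intro hcl
    -- a ball around ξ free of singular points of C
    obtain ⟨ε₀, hε₀, hsub₀⟩ :=
      Metric.isOpen_iff.mp (isClosed_closure.isOpen_compl) ξ hξsing
    have hball₀ : ∀ w ∈ ball ξ ε₀, w ∉ SingPts C := fun w hw hws =>
      hsub₀ hw (subset_closure hws)
    -- the bad sets
    set F : Fin m → Set E3 := fun i =>
      (fun q : ℝ × E3 => q.1 • O i + (1 - q.1) • q.2) ''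
        ((Icc (0:ℝ) 1 ×ˢ C) ∩ {q | 1/2 ≤ q.1 ∨ ε₀ ≤ dist q.2 ξ}) with hFdef
    have hFcomp : ∀ i, IsCompact (F i) := by
      intro i
      refine IsCompact.image ?_ (by fun_prop)
      refine (isCompact_Icc.prod hCcomp).inter_right ?_
      exact ((isClosed_le continuous_const continuous_fst).union
        (isClosed_le continuous_const (continuous_snd.dist continuous_const)))
    have hξF : ∀ i, ξ ∉ F i := by
      rintro i ⟨⟨lam, c⟩, ⟨⟨⟨hl0, hl1⟩, hcC⟩, hbad⟩, heq⟩
      obtain ⟨hla, hlc⟩ := hkey0 i lam c hcC hl0 hl1 heq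
      rcases hbad with hb | hb
      · rw [hla] at hb; norm_num at hb
      · rw [hlc] at hb; simp at hb; linarith
    obtain ⟨ε, hεpos, hballsub⟩ := Metric.isOpen_iff.mp
      (isOpen_ball.inter (isOpen_iInter_of_finite fun i => (hFcomp i).isClosed.isOpen_compl))
      ξ ⟨mem_ball_self hε₀, mem_iInter.mpr fun i => hξF i⟩
    -- fetch a singular point of Ct in the small ball
    rw [Metric.mem_closure_iff] at hcl
    obtain ⟨z, hzS, hzd⟩ := hcl ε hεpos
    have hzball : z ∈ ball ξ ε := by rw [mem_ball, dist_comm]; exact hzd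
    obtain ⟨hzfront, n₁, n₂, hn12, hn₁, hn₂⟩ := hzS
    -- Ct is compact hence closed
    have hCtcomp : IsCompact Ct := by
      rcases isEmpty_or_nonempty (Fin m) with hm | hm
      · rw [hCtdef, Set.range_eq_empty O, Set.union_empty, hCconv.convexHull_eq]
        exact hCcomp
      · have hD : IsCompact (convexHull ℝ (Set.range O)) :=
          (Set.finite_range O).isCompact_convexHull (𝕜 := ℝ)
        have hne : (Set.range O).Nonempty := range_nonempty O
        rw [hCtdef, convexHull_union hCne hne, hCconv.convexHull_eq]
        have himg : convexJoin ℝ C (convexHull ℝ (Set.range O)) =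
            (fun p : (ℝ × E3) × E3 => p.1.1 • p.1.2 + (1 - p.1.1) • p.2) ''
              ((Icc (0:ℝ) 1 ×ˢ C) ×ˢ convexHull ℝ (Set.range O)) := by
          ext x
          constructor
          · intro hx
            rw [mem_convexJoin] at hx
            obtain ⟨aa, ha, bb, hb, tt, ss, htt, hss, hts, heq⟩ := hx
            refine ⟨((tt, aa), bb), ⟨⟨⟨htt, by linarith⟩, ha⟩, hb⟩, ?_⟩
            show tt • aa + (1 - tt) • bb = x
            rw [show (1:ℝ) - tt = ss by linarith]; exact heq
          · rintro ⟨⟨⟨tt, aa⟩, bb⟩, ⟨⟨⟨ht0, ht1⟩, ha⟩, hb⟩, heq⟩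
            rw [mem_convexJoin]
            exact ⟨aa, ha, bb, hb, tt, 1 - tt, ht0, by linarith, by ring, heq⟩
        rw [himg]
        exact ((isCompact_Icc.prod hCcomp).prod hD).image (by fun_prop)
    have hzCt : z ∈ Ct := by
      have h1 : z ∈ closure Ct := hzfront.1
      rwa [hCtcomp.isClosed.closure_eq] at h1
    have hznotint : z ∉ interior Ct := hzfront.2
    by_cases hzC : z ∈ C
    · -- z is then a singular point of C near ξ : contradiction
      have hzfC : z ∈ frontier C :=
        ⟨subset_closure hzC, fun h => hznotint (interior_mono hsubCt h)⟩
      refine hball₀ z ((hballsub hzball).1) ⟨hzfC, n₁, n₂, hn12,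
        ⟨hn₁.1, fun x hx => hn₁.2 x (hsubCt hx)⟩,
        ⟨hn₂.1, fun x hx => hn₂.2 x (hsubCt hx)⟩⟩
    · -- z lies on a segment [O i, c] ; then c is a singular point of C near ξ
      rcases hsplit hzCt with h | h
      · exact hzC h
      obtain ⟨i, hzi⟩ := mem_iUnion.mp h
      rw [convexHull_insert hCne, hCconv.convexHull_eq, mem_convexJoin] at hzi
      obtain ⟨w, hw, c, hcC, hzseg⟩ := hzi
      rw [mem_singleton_iff] at hw
      subst hw
      obtain ⟨a, b, ha, hb, hab, heq⟩ := hzseg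
      have hb' : b = 1 - a := by linarith
      subst hb'
      have ha1 : a ≤ 1 := by linarith
      have hnotF : z ∉ F i := mem_iInter.mp (hballsub hzball).2 i
      have hgood : a < 1/2 ∧ dist c ξ < ε₀ := by
        by_contra hbad
        apply hnotF
        refine ⟨(a, c), ⟨⟨⟨ha, ha1⟩, hcC⟩, ?_⟩, heq⟩
        rcases le_or_gt (1/2 : ℝ) a with h | h
        · exact Or.inl h
        · rcases le_or_gt ε₀ (dist c ξ) with h' | h'
          · exact Or.inr h'
          · exact absurd ⟨h, h'⟩ hbad
      have hapos : 0 < a := by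
        rcases eq_or_lt_of_le ha with h0 | h0
        · exfalso; apply hzC; rw [← heq, ← h0]; simpa using hcC
        · exact h0
      have hb0 : 0 < 1 - a := by linarith [hgood.1]
      -- transfer normals from z to c
      have htrans : ∀ nn : E3, IsOutwardNormal Ct z nn → IsOutwardNormal C c nn := by
        rintro nn ⟨hnorm, hle⟩
        have h1 : (inner ℝ (O i - z) nn : ℝ) ≤ 0 := hle _ (hOCt i)
        have h2 : (inner ℝ (c - z) nn : ℝ) ≤ 0 := hle _ (hsubCt hcC)
        have e1 : O i - z = (1-a) • (O i - c) := by rw [← heq]; module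
        have e2 : c - z = a • (c - O i) := by rw [← heq]; module
        have e3 : (inner ℝ (c - O i) nn : ℝ) = - inner ℝ (O i - c) nn := by
          rw [show c - O i = -(O i - c) by abel, inner_neg_left]
        rw [e1, real_inner_smul_left] at h1
        rw [e2, real_inner_smul_left, e3] at h2
        have hioc : (inner ℝ (O i - c) nn : ℝ) = 0 := by nlinarith
        refine ⟨hnorm, fun x hx => ?_⟩
        have hx4 := hle x (hsubCt hx)
        have e4 : x - c = (x - z) + (z - c) := by abel
        have e5 : (inner ℝ (z - c) nn : ℝ) = a * inner ℝ (O i - c) nn := by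
          rw [show z - c = a • (O i - c) by rw [← heq]; module, real_inner_smul_left]
        rw [e4, inner_add_left, e5, hioc, mul_zero, add_zero]
        exact hx4
      -- c is on the frontier of C
      have hcfront : c ∈ frontier C := by
        refine ⟨subset_closure hcC, fun hint => ?_⟩
        obtain ⟨r, hr, hballc⟩ := Metric.isOpen_iff.mp isOpen_interior c hint
        have hxm : c + (r/2) • n₁ ∈ C := by
          apply interior_subset
          apply hballc
          rw [mem_ball, dist_eq_norm, add_sub_cancel_left, norm_smul, Real.norm_eq_abs,
            abs_of_pos (by linarith), (htrans n₁ hn₁).1, mul_one]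
          linarith
        have hcon := (htrans n₁ hn₁).2 _ hxm
        rw [add_sub_cancel_left, real_inner_smul_left, real_inner_self_eq_norm_sq,
          (htrans n₁ hn₁).1] at hcon
        norm_num at hcon
        linarith
      exact hball₀ c (by rw [mem_ball]; exact hgood.2)
        ⟨hcfront, n₁, n₂, hn12, htrans n₁ hn₁, htrans n₂ hn₂⟩
end
end

section
/- Let C ⊂ ℝ³ be a convex body and let {O₁, O₂, …} be a finite or countable set of points lying outside C such that for all i ≠ j the open segment (O_i, O_j) intersects C. Let C̃ = Conv(C ∪ {O₁, O₂, …}). Then {O₁, O₂, …} ⊆ Ext C̃ ⊆ Ext C ∪ {O₁, O₂, …}. -/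
open Set Metric

noncomputable section

/-- If `{O_i}` is a finite or countable set of points outside the convex body `C` such that
each open segment `(O_i, O_j)` (for `i ≠ j`) meets `C`, and `C̃ = Conv(C ∪ {O₁, O₂, …})`,
then `{O₁, O₂, …} ⊆ Ext C̃ ⊆ Ext C ∪ {O₁, O₂, …}`. -/
theorem stmt8 {ι : Type} [Countable ι]
    (C : Set E3) (hC : IsConvexBody C)
    (O : ι → E3) (hO : ∀ i, O i ∉ C)
    (hseg : ∀ i j, i ≠ j → (openSegment ℝ (O i) (O j) ∩ C).Nonempty) :
    Set.range O ⊆ Set.extremePoints ℝ (convexHull ℝ (C ∪ Set.range O)) ∧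
    Set.extremePoints ℝ (convexHull ℝ (C ∪ Set.range O)) ⊆
      Set.extremePoints ℝ C ∪ Set.range O := by
  obtain ⟨hcomp, hconv, hint⟩ := hC
  have hCne : C.Nonempty := hint.mono interior_subset
  constructor
  · -- range O ⊆ extreme points of the hull
    rintro _ ⟨i, rfl⟩
    -- separate O i from C
    obtain ⟨f, c, hfC, hfO⟩ :=
      geometric_hahn_banach_closed_point hconv hcomp.isClosed (hO i)
    -- all other generating points also satisfy f < c
    have hT : ∀ y ∈ (C ∪ Set.range O) \ {O i}, f y < c := by
      rintro y ⟨hy, hyne⟩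
      rcases hy with hy | ⟨j, rfl⟩
      · exact hfC y hy
      · have hji : j ≠ i := by rintro rfl; exact hyne rfl
        obtain ⟨p, hpseg, hpC⟩ := hseg j i hji
        obtain ⟨a, b, ha, hb, hab, rfl⟩ := hpseg
        have hfp : f (a • O j + b • O i) < c := hfC _ hpC
        have hlin : a * f (O j) + b * f (O i) < c := by
          simpa [map_add, map_smul, smul_eq_mul] using hfp
        by_contra hge
        push_neg at hge
        have h1 : b * c < b * f (O i) := mul_lt_mul_of_pos_left hfO hb
        have h2 : a * c ≤ a * f (O j) := mul_le_mul_of_nonneg_left hge ha.le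
        have hsum : a * c + b * c = c := by rw [← add_mul, hab, one_mul]
        linarith
    set T : Set E3 := (C ∪ Set.range O) \ {O i} with hTdef
    have hCT : C ⊆ T := by
      intro x hx
      simp only [hTdef, mem_diff, mem_singleton_iff]
      refine ⟨Or.inl hx, ?_⟩
      rintro rfl
      exact hO i hx
    have hTne : T.Nonempty := hCne.mono hCT
    have hSins : C ∪ Set.range O = insert (O i) T := by
      rw [hTdef, insert_diff_singleton]
      exact (insert_eq_self.2 (mem_union_right C (mem_range_self i))).symm
    have hhullT : ∀ z ∈ convexHull ℝ T, f z < c := fun z hz =>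
      convexHull_min hT (convex_halfSpace_lt (f := fun w => f w) f.toLinearMap.isLinear c) hz
    -- every point of the hull has f ≤ f (O i), with equality only at O i
    have key : ∀ w ∈ convexHull ℝ (C ∪ Set.range O),
        f w ≤ f (O i) ∧ (f w = f (O i) → w = O i) := by
      intro w hw
      rw [hSins, convexHull_insert hTne, mem_convexJoin] at hw
      obtain ⟨x, hx, z, hz, hwseg⟩ := hw
      rw [mem_singleton_iff] at hx; subst hx
      obtain ⟨a, b, ha, hb, hab, rfl⟩ := hwseg
      have hfz : f z < f (O i) := (hhullT z hz).trans hfO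
      have hval : f (a • O i + b • z) = a * f (O i) + b * f z := by
        simp [map_add, map_smul, smul_eq_mul]
      have hsum : a * f (O i) + b * f (O i) = f (O i) := by
        rw [← add_mul, hab, one_mul]
      have hbz : b * f z ≤ b * f (O i) := mul_le_mul_of_nonneg_left hfz.le hb
      constructor
      · rw [hval]; linarith
      · intro heq
        rw [hval] at heq
        have hb0 : b = 0 := by
          by_contra hne
          have hb' : 0 < b := hb.lt_of_ne (Ne.symm hne)
          have := mul_lt_mul_of_pos_left hfz hb'
          linarith
        have ha1 : a = 1 := by linarith
        simp [hb0, ha1]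
    rw [mem_extremePoints]
    refine ⟨subset_convexHull ℝ _ (mem_union_right C (mem_range_self i)), ?_⟩
    intro x₁ hx₁ x₂ hx₂ hmem
    obtain ⟨a, b, ha, hb, hab, habO⟩ := hmem
    have h1 := key x₁ hx₁
    have h2 := key x₂ hx₂
    have hfeq : a * f x₁ + b * f x₂ = f (O i) := by
      rw [← habO]; simp [map_add, map_smul, smul_eq_mul]
    have hsum : a * f (O i) + b * f (O i) = f (O i) := by
      rw [← add_mul, hab, one_mul]
    have h1' : a * f x₁ ≤ a * f (O i) := mul_le_mul_of_nonneg_left h1.1 ha.le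
    have h2' : b * f x₂ ≤ b * f (O i) := mul_le_mul_of_nonneg_left h2.1 hb.le
    have hf1 : f x₁ = f (O i) := by
      by_contra hne
      have hlt := mul_lt_mul_of_pos_left (lt_of_le_of_ne h1.1 hne) ha
      linarith
    have hf2 : f x₂ = f (O i) := by
      by_contra hne
      have hlt := mul_lt_mul_of_pos_left (lt_of_le_of_ne h2.1 hne) hb
      linarith
    exact ⟨h1.2 hf1, h2.2 hf2⟩
  · -- extreme points of the hull are extreme points of C or some O i
    intro x hx
    have hxS : x ∈ C ∪ Set.range O := extremePoints_convexHull_subset hx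
    rcases hxS with hxC | hxO
    · left
      rw [mem_extremePoints] at hx ⊢
      refine ⟨hxC, fun x₁ hx₁ x₂ hx₂ hmem => ?_⟩
      exact hx.2 x₁ (subset_convexHull ℝ _ (mem_union_left _ hx₁))
        x₂ (subset_convexHull ℝ _ (mem_union_left _ hx₂)) hmem
    · exact Or.inr hxO
end
end

section
/- Let C ⊂ ℝ³ be a convex body and let {O₁, O₂, …} be a finite or countable set of points lying outside C such that for all i ≠ j the open segment (O_i, O_j) intersects C, and assume additionally that for every i and every ξ ∈ Sing C the open segment (O_i, ξ) intersects C. Let C̃ = Conv(C ∪ {O₁, O₂, …}). Then Sing C ∪ {O₁, O₂, …} ⊆ Sing C̃. -/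
open Set Metric RealInnerProductSpace

noncomputable section

lemma halfspace_hull {S : Set E3} {ξ n : E3} (h : ∀ y ∈ S, ⟪y - ξ, n⟫ ≤ 0) :
    ∀ x ∈ convexHull ℝ S, ⟪x - ξ, n⟫ ≤ 0 := by
  have hlin : IsLinearMap ℝ (fun x : E3 => ⟪x, n⟫) :=
    ⟨fun x y => inner_add_left x y n, fun c x => real_inner_smul_left x n c⟩
  have hconv : Convex ℝ {x : E3 | ⟪x, n⟫ ≤ ⟪ξ, n⟫} := convex_halfSpace_le hlin _
  have hsub : convexHull ℝ S ⊆ {x : E3 | ⟪x, n⟫ ≤ ⟪ξ, n⟫} := by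
    apply convexHull_min _ hconv
    intro y hy
    have := h y hy
    simp only [inner_sub_left, mem_setOf_eq] at this ⊢
    linarith
  intro x hx
  have := hsub hx
  simp only [mem_setOf_eq] at this
  rw [inner_sub_left]
  linarith

lemma normal_not_interior {s : Set E3} {ξ n : E3} (hn : IsOutwardNormal s ξ n) :
    ξ ∉ interior s := by
  intro h
  obtain ⟨ε, hε, hball⟩ := Metric.mem_nhds_iff.1 (mem_interior_iff_mem_nhds.1 h)
  have hx : ξ + (ε / 2) • n ∈ s := by
    apply hball
    simp only [mem_ball, dist_eq_norm, add_sub_cancel_left, norm_smul, hn.1,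
      Real.norm_eq_abs]
    rw [abs_of_pos (by linarith)]
    linarith
  have := hn.2 _ hx
  rw [add_sub_cancel_left, real_inner_smul_left, real_inner_self_eq_norm_sq, hn.1] at this
  nlinarith

lemma seg_norm_sq {u v : E3} (h : 0 ≤ ⟪u, v⟫) {a b : ℝ} (ha : 0 ≤ a) (hb : 0 ≤ b)
    (hab : a + b = 1) : min ‖u‖ ‖v‖ ^ 2 / 2 ≤ ‖a • u + b • v‖ ^ 2 := by
  have expand : ‖a • u + b • v‖ ^ 2
      = a ^ 2 * ‖u‖ ^ 2 + 2 * (a * b) * ⟪u, v⟫ + b ^ 2 * ‖v‖ ^ 2 := by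
    rw [norm_add_sq_real, norm_smul, norm_smul, real_inner_smul_left, real_inner_smul_right,
      Real.norm_eq_abs, Real.norm_eq_abs, abs_of_nonneg ha, abs_of_nonneg hb]
    ring
  have hb' : b = 1 - a := by linarith
  subst hb'
  have ha1 : (0:ℝ) ≤ 1 - a := by linarith
  rcases min_cases ‖u‖ ‖v‖ with ⟨hm, hle⟩ | ⟨hm, hle⟩ <;> rw [hm]
  · have h2 : ‖u‖ ^ 2 ≤ ‖v‖ ^ 2 := pow_le_pow_left₀ (norm_nonneg u) hle 2
    nlinarith [sq_nonneg ((a - 1/2) * ‖u‖), mul_nonneg (sq_nonneg (1 - a)) (sub_nonneg.2 h2),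
      mul_nonneg (mul_nonneg ha ha1) h]
  · have h2 : ‖v‖ ^ 2 ≤ ‖u‖ ^ 2 := pow_le_pow_left₀ (norm_nonneg v) hle.le 2
    nlinarith [sq_nonneg ((a - 1/2) * ‖v‖), mul_nonneg (sq_nonneg a) (sub_nonneg.2 h2),
      mul_nonneg (mul_nonneg ha ha1) h]

set_option maxHeartbeats 1000000 in
lemma range_bounded {ι : Type} (C : Set E3) (hComp : IsCompact C)
    (O : ι → E3)
    (hseg : ∀ i j, i ≠ j → (openSegment ℝ (O i) (O j) ∩ C).Nonempty) :
    ∃ R : ℝ, ∀ j, ‖O j‖ ≤ R := by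
  by_contra hunb
  push_neg at hunb
  obtain ⟨r, hr⟩ := hComp.isBounded.subset_closedBall 0
  set M0 : ℝ := max r 0 with hM0
  have hM0nn : 0 ≤ M0 := le_max_right r 0
  have hCball : ∀ x ∈ C, ‖x‖ ≤ M0 := fun x hx => le_trans (by
    simpa [dist_eq_norm] using hr hx) (le_max_left r 0)
  set T : ℝ := 2 * M0 + 1 with hT
  have hTpos : 0 < T := by positivity
  -- choose points of increasing norm
  have hstep : ∀ r : ℝ, ∃ j, r < ‖O j‖ := fun r => hunb r
  choose g hg using hstep
  obtain ⟨f, hf0, hfs⟩ : ∃ f : ℕ → ι, T < ‖O (f 0)‖ ∧ ∀ n, ‖O (f n)‖ < ‖O (f (n + 1))‖ :=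
    ⟨fun n => Nat.rec (motive := fun _ => ι) (g T) (fun _ jp => g ‖O jp‖) n, hg T, fun n => hg _⟩
  have hmono : StrictMono (fun n => ‖O (f n)‖) := strictMono_nat_of_lt_succ hfs
  have hfT : ∀ n, T < ‖O (f n)‖ := by
    intro n
    exact lt_of_lt_of_le hf0 ((hmono.le_iff_le).2 (Nat.zero_le n))
  have hfpos : ∀ n, 0 < ‖O (f n)‖ := fun n => lt_trans hTpos (hfT n)
  -- unit vectors
  obtain ⟨w, hwdef⟩ : ∃ w : ℕ → E3, ∀ n, w n = (‖O (f n)‖)⁻¹ • O (f n) :=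
    ⟨fun n => (‖O (f n)‖)⁻¹ • O (f n), fun n => rfl⟩
  have hw : ∀ n, w n ∈ sphere (0 : E3) 1 := by
    intro n
    simp only [hwdef, mem_sphere_iff_norm, sub_zero, norm_smul, norm_inv, Real.norm_eq_abs,
      abs_of_pos (hfpos n)]
    exact inv_mul_cancel₀ (hfpos n).ne' 
  obtain ⟨x, -, φ, hφ, hconv⟩ := (isCompact_sphere (0 : E3) 1).tendsto_subseq hw
  have := Metric.tendsto_atTop.1 hconv (1/2) (by norm_num)
  obtain ⟨N, hN⟩ := this
  set a := φ N with hadef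
  set b := φ (N + 1) with hbdef
  have hab : a < b := hφ (Nat.lt_succ_self N)
  have hdist : dist (w a) (w b) < 1 := by
    calc dist (w a) (w b) ≤ dist (w a) x + dist (w b) x := dist_triangle_right _ _ _
    _ < 1/2 + 1/2 := add_lt_add (hN N le_rfl) (hN (N+1) (Nat.le_succ N))
    _ = 1 := by norm_num
  have hnorm1 : ∀ n, ‖w n‖ = 1 := by
    intro n; simpa [mem_sphere_iff_norm] using hw n
  have hinner : 0 ≤ ⟪w a, w b⟫ := by
    have hsq : ‖w a - w b‖ ^ 2 = ‖w a‖ ^ 2 - 2 * ⟪w a, w b⟫ + ‖w b‖ ^ 2 := by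
      rw [← real_inner_self_eq_norm_sq, inner_sub_sub_self, real_inner_self_eq_norm_sq,
        real_inner_self_eq_norm_sq, real_inner_comm]
      ring
    have h1 : ‖w a - w b‖ < 1 := by rwa [← dist_eq_norm]
    have h2 : ‖w a - w b‖ ^ 2 < 1 := by
      nlinarith [norm_nonneg (w a - w b)]
    rw [hnorm1 a, hnorm1 b] at hsq
    nlinarith
  have hinnerO : 0 ≤ ⟪O (f a), O (f b)⟫ := by
    have : O (f a) = ‖O (f a)‖ • w a := by
      simp only [hwdef, smul_smul, mul_inv_cancel₀ (hfpos a).ne', one_smul]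
    rw [this]
    have : O (f b) = ‖O (f b)‖ • w b := by
      simp only [hwdef, smul_smul, mul_inv_cancel₀ (hfpos b).ne', one_smul]
    rw [this, real_inner_smul_left, real_inner_smul_right]
    exact mul_nonneg (norm_nonneg _) (mul_nonneg (norm_nonneg _) hinner)
  -- distinct indices
  have hne : f a ≠ f b := by
    have hlt : ‖O (f a)‖ < ‖O (f b)‖ := hmono hab
    intro h
    rw [h] at hlt
    exact lt_irrefl _ hlt
  obtain ⟨p, hpseg, hpC⟩ := hseg (f a) (f b) hne
  obtain ⟨c, d, hc, hd, hcd, rfl⟩ := hpseg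
  have hmin : T ≤ min ‖O (f a)‖ ‖O (f b)‖ := le_min (hfT a).le (hfT b).le
  have hlow := seg_norm_sq hinnerO hc.le hd.le hcd
  have hTsq : T ^ 2 ≤ min ‖O (f a)‖ ‖O (f b)‖ ^ 2 := pow_le_pow_left₀ hTpos.le hmin 2
  have hup : ‖c • O (f a) + d • O (f b)‖ ≤ M0 := hCball _ hpC
  have hupsq : ‖c • O (f a) + d • O (f b)‖ ^ 2 ≤ M0 ^ 2 :=
    pow_le_pow_left₀ (norm_nonneg _) hup 2
  nlinarith

/-- If `{O_i}` is a finite or countable set of points outside the convex body `C` such that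
each open segment `(O_i, O_j)` (for `i ≠ j`) meets `C`, and moreover each open segment
`(O_i, ξ)` with `ξ ∈ Sing C` meets `C`, then for `C̃ = Conv(C ∪ {O₁, O₂, …})` one has
`Sing C ∪ {O₁, O₂, …} ⊆ Sing C̃`. -/
theorem stmt9 {ι : Type} [Countable ι]
    (C : Set E3) (hC : IsConvexBody C)
    (O : ι → E3) (hO : ∀ i, O i ∉ C)
    (hseg : ∀ i j, i ≠ j → (openSegment ℝ (O i) (O j) ∩ C).Nonempty)
    (hsing : ∀ i, ∀ ξ ∈ SingPts C, (openSegment ℝ (O i) ξ ∩ C).Nonempty) :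
    SingPts C ∪ Set.range O ⊆ SingPts (convexHull ℝ (C ∪ Set.range O)) := by
  obtain ⟨hCcomp, hCconv, hCint⟩ := hC
  have hCclosed : IsClosed C := hCcomp.isClosed
  have hCne : C.Nonempty := hCint.mono interior_subset
  set S : Set E3 := C ∪ Set.range O with hSdef
  rintro ξ (hξ | ⟨i, rfl⟩)
  · -- ξ a singular point of C
    obtain ⟨hfr, n₁, n₂, hnne, h1, h2⟩ := hξ
    have key : ∀ n, IsOutwardNormal C ξ n → IsOutwardNormal (convexHull ℝ S) ξ n := by
      rintro n ⟨hn1, hn2⟩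
      refine ⟨hn1, halfspace_hull ?_⟩
      rintro y (hy | ⟨j, rfl⟩)
      · exact hn2 y hy
      · obtain ⟨p, hpseg, hpC⟩ := hsing j ξ ⟨hfr, n₁, n₂, hnne, h1, h2⟩
        obtain ⟨a, b, ha, hb, hab, rfl⟩ := hpseg
        have h0 := hn2 _ hpC
        have hb1 : b = 1 - a := by linarith
        subst hb1
        have heq : a • O j + (1 - a) • ξ - ξ = a • (O j - ξ) := by module
        rw [heq, real_inner_smul_left] at h0
        nlinarith
    have hξC : ξ ∈ C := hCclosed.frontier_subset hfr
    have hξT : ξ ∈ convexHull ℝ S := subset_convexHull ℝ S (Or.inl hξC)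
    exact ⟨⟨subset_closure hξT, normal_not_interior (key n₁ h1)⟩,
      n₁, n₂, hnne, key n₁ h1, key n₂ h2⟩
  · -- the point O i
    obtain ⟨R, hR⟩ := range_bounded C hCcomp O hseg
    obtain ⟨r, hr⟩ := hCcomp.isBounded.subset_closedBall 0
    -- nearest point projection of O i onto C
    obtain ⟨v, hvC, hvmin⟩ :=
      exists_norm_eq_iInf_of_complete_convex hCne hCcomp.isComplete hCconv (O i)
    have hvproj : ∀ w ∈ C, ⟪O i - v, w - v⟫ ≤ 0 :=
      (norm_eq_iInf_iff_real_inner_le_zero hCconv hvC).1 hvmin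
    obtain ⟨d, hddef⟩ : ∃ d : ℝ, d = ‖O i - v‖ := ⟨_, rfl⟩
    have hdpos : 0 < d := by
      rw [hddef, norm_pos_iff]
      exact sub_ne_zero.2 (fun h => hO i (h ▸ hvC))
    obtain ⟨n, hndef⟩ : ∃ n : E3, n = d⁻¹ • (O i - v) := ⟨_, rfl⟩
    have hnunit : ‖n‖ = 1 := by
      rw [hndef, norm_smul, norm_inv, Real.norm_eq_abs, abs_of_pos hdpos, ← hddef,
        inv_mul_cancel₀ hdpos.ne']
    -- uniform negativity on C
    have hCn : ∀ w ∈ C, ⟪w - O i, n⟫ ≤ -d := by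
      intro w hw
      have h1 := hvproj w hw
      have hsplit : w - O i = (w - v) - (O i - v) := by abel
      rw [hndef, real_inner_smul_right, hsplit, inner_sub_left,
        real_inner_self_eq_norm_sq, ← hddef]
      have h2 : ⟪w - v, O i - v⟫ ≤ 0 := by rwa [real_inner_comm]
      have h3 : ⟪w - v, O i - v⟫ - d ^ 2 ≤ -d ^ 2 := by linarith
      calc d⁻¹ * (⟪w - v, O i - v⟫ - d ^ 2) ≤ d⁻¹ * (-d ^ 2) := by
            exact mul_le_mul_of_nonneg_left h3 (inv_nonneg.2 hdpos.le)
        _ = -d := by field_simp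
    -- uniform negativity on the other O j
    have hOn : ∀ j, j ≠ i → ⟪O j - O i, n⟫ ≤ -d := by
      intro j hj
      obtain ⟨p, hpseg, hpC⟩ := hseg i j (Ne.symm hj)
      obtain ⟨a, b, ha, hb, hab, rfl⟩ := hpseg
      have h0 := hCn _ hpC
      have ha1 : a = 1 - b := by linarith
      subst ha1
      have heq : (1 - b) • O i + b • O j - O i = b • (O j - O i) := by module
      rw [heq, real_inner_smul_left] at h0
      have hb1 : b ≤ 1 := by linarith
      nlinarith
    -- the strong normal property on the generators
    have hstrong : ∀ y ∈ S, y = O i ∨ ⟪y - O i, n⟫ ≤ -d := by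
      rintro y (hy | ⟨j, rfl⟩)
      · exact Or.inr (hCn y hy)
      · by_cases hji : j = i
        · exact Or.inl (by rw [hji])
        · exact Or.inr (hOn j hji)
    have hgen : ∀ (m : E3), (∀ y ∈ S, y ≠ O i → ⟪y - O i, m⟫ ≤ 0) →
        ∀ y ∈ S, ⟪y - O i, m⟫ ≤ 0 := by
      intro m hm y hy
      by_cases hyi : y = O i
      · simp [hyi]
      · exact hm y hy hyi
    -- n is an outward normal at O i
    have hOiT : O i ∈ convexHull ℝ S := subset_convexHull ℝ S (Or.inr ⟨i, rfl⟩)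
    have hnorm1 : IsOutwardNormal (convexHull ℝ S) (O i) n := by
      refine ⟨hnunit, halfspace_hull (hgen n ?_)⟩
      intro y hy hyne
      rcases hstrong y hy with h | h
      · exact absurd h hyne
      · linarith
    -- a unit vector orthogonal to n
    have hnne0 : n ≠ 0 := by
      intro h; rw [h, norm_zero] at hnunit; norm_num at hnunit
    obtain ⟨u, hu1, hun⟩ : ∃ u : E3, ‖u‖ = 1 ∧ ⟪u, n⟫ = 0 := by
      have hne_top : (ℝ ∙ n) ≠ ⊤ := by
        intro h
        have h1 : Module.finrank ℝ (ℝ ∙ n) = 1 := finrank_span_singleton hnne0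
        have h2 : Module.finrank ℝ E3 = 3 := by
          simp [finrank_euclideanSpace]
        rw [h] at h1
        rw [finrank_top] at h1
        rw [h2] at h1
        norm_num at h1
      obtain ⟨z, hz⟩ : ∃ z : E3, z ∉ (ℝ ∙ n) := by
        by_contra hcon
        push_neg at hcon
        exact hne_top (Submodule.eq_top_iff'.2 hcon)
      set u0 : E3 := z - ⟪z, n⟫ • n with hu0def
      have hu0n : ⟪u0, n⟫ = 0 := by
        rw [hu0def, inner_sub_left, real_inner_smul_left, real_inner_self_eq_norm_sq,
          hnunit]
        ring
      have hu0ne : u0 ≠ 0 := by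
        intro h
        apply hz
        rw [sub_eq_zero.1 h]
        exact Submodule.smul_mem _ _ (Submodule.mem_span_singleton_self n)
      refine ⟨‖u0‖⁻¹ • u0, ?_, ?_⟩
      · rw [norm_smul, norm_inv, Real.norm_eq_abs, abs_of_pos (norm_pos_iff.2 hu0ne),
          inv_mul_cancel₀ (norm_pos_iff.2 hu0ne).ne']
      · rw [real_inner_smul_left, hu0n, mul_zero]
    -- uniform bound on ‖y - O i‖ for y in S
    obtain ⟨B, hBdef⟩ : ∃ B : ℝ, B = max r 0 + max R 0 + ‖O i‖ := ⟨_, rfl⟩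
    have hBnn : 0 ≤ B := by rw [hBdef]; positivity
    have hSB : ∀ y ∈ S, ‖y - O i‖ ≤ B := by
      rintro y (hy | ⟨j, rfl⟩)
      · have : ‖y‖ ≤ max r 0 := le_trans (by simpa [dist_eq_norm] using hr hy) (le_max_left _ _)
        calc ‖y - O i‖ ≤ ‖y‖ + ‖O i‖ := norm_sub_le _ _
          _ ≤ B := by rw [hBdef]; have := le_max_right R 0; linarith
      · have : ‖O j‖ ≤ max R 0 := le_trans (hR j) (le_max_left _ _)
        calc ‖O j - O i‖ ≤ ‖O j‖ + ‖O i‖ := norm_sub_le _ _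
          _ ≤ B := by rw [hBdef]; have := le_max_right r 0; linarith
    -- the perturbed normal
    obtain ⟨ε, hεdef⟩ : ∃ ε : ℝ, ε = d / (B + 1) := ⟨_, rfl⟩
    have hεpos : 0 < ε := hεdef ▸ div_pos hdpos (by linarith)
    have hεB : ε * B ≤ d := by
      rw [hεdef]
      rw [div_mul_eq_mul_div, div_le_iff₀ (by linarith : (0:ℝ) < B + 1)]
      nlinarith
    obtain ⟨w2, hw2def⟩ : ∃ w2 : E3, w2 = n + ε • u := ⟨_, rfl⟩
    have hw2sq : ⟪w2, w2⟫ = 1 + ε ^ 2 := by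
      have hnu : ⟪n, u⟫ = 0 := by rw [real_inner_comm]; exact hun
      have e1 : ⟪n, ε • u⟫ = 0 := by rw [real_inner_smul_right, hnu, mul_zero]
      have e2 : ⟪ε • u, n⟫ = 0 := by rw [real_inner_smul_left, hun, mul_zero]
      have e3 : ⟪ε • u, ε • u⟫ = ε ^ 2 := by
        rw [real_inner_smul_left, real_inner_smul_right, real_inner_self_eq_norm_sq, hu1]
        ring
      rw [hw2def, inner_add_add_self, e1, e2, e3, real_inner_self_eq_norm_sq, hnunit]
      ring
    have hw2pos : 0 < ‖w2‖ := by
      rw [norm_pos_iff]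
      intro h
      rw [h, inner_zero_left] at hw2sq
      nlinarith
    have hw2n : ∀ y ∈ S, ⟪y - O i, w2⟫ ≤ 0 := by
      apply hgen
      intro y hy hyne
      rcases hstrong y hy with h | h
      · exact absurd h hyne
      · have hcs : ⟪y - O i, u⟫ ≤ ‖y - O i‖ := by
          have := real_inner_le_norm (y - O i) u
          rwa [hu1, mul_one] at this
        have hyB := hSB y hy
        rw [hw2def, inner_add_right, real_inner_smul_right]
        have : ε * ⟪y - O i, u⟫ ≤ ε * B :=
          mul_le_mul_of_nonneg_left (le_trans hcs hyB) hεpos.le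
        linarith
    obtain ⟨n2, hn2def⟩ : ∃ n2 : E3, n2 = ‖w2‖⁻¹ • w2 := ⟨_, rfl⟩
    have hn2unit : ‖n2‖ = 1 := by
      rw [hn2def, norm_smul, norm_inv, Real.norm_eq_abs, abs_of_pos hw2pos,
        inv_mul_cancel₀ hw2pos.ne']
    have hnorm2 : IsOutwardNormal (convexHull ℝ S) (O i) n2 := by
      refine ⟨hn2unit, ?_⟩
      intro x hx
      have := halfspace_hull hw2n x hx
      rw [hn2def, real_inner_smul_right]
      exact mul_nonpos_of_nonneg_of_nonpos (inv_nonneg.2 hw2pos.le) this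
    have hne12 : n ≠ n2 := by
      intro h
      have h1 : ⟪u, n⟫ = 0 := hun
      have h2 : ⟪u, n2⟫ = ‖w2‖⁻¹ * ε := by
        rw [hn2def, real_inner_smul_right, hw2def, inner_add_right,
          real_inner_smul_right, hun, real_inner_self_eq_norm_sq, hu1]
        ring
      rw [← h] at h2
      rw [h1] at h2
      have : 0 < ‖w2‖⁻¹ * ε := mul_pos (inv_pos.2 hw2pos) hεpos
      rw [← h2] at this
      exact lt_irrefl _ this
    exact ⟨⟨subset_closure hOiT, normal_not_interior hnorm1⟩, n, n2, hne12, hnorm1, hnorm2⟩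
end
end

section
/- Let C ⊂ ℝ³ be a convex body, let ξ ∈ Ext C \ closure(Sing C), and let A ⊆ C be a closed set with ξ ∉ A. Then for every ε > 0 there exists a point O ∉ C such that dist(ξ, O) < ε and for every x ∈ A the open segment (O, x) intersects the interior of C. -/
open Set Metric

noncomputable section
set_option maxHeartbeats 1000000

lemma isCompact_convexHull_of_isCompact {S : Set E3} (hS : IsCompact S) :
    IsCompact (convexHull ℝ S) := by
  classical
  rcases S.eq_empty_or_nonempty with h | ⟨s₀, hs₀⟩
  · simp [h]
  have hTcomp : IsCompact ((stdSimplex ℝ (Fin 4)) ×ˢ (Set.univ.pi fun _ : Fin 4 => S)) :=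
    (isCompact_stdSimplex _ _).prod (isCompact_univ_pi fun _ => hS)
  have hcont : Continuous fun p : (Fin 4 → ℝ) × (Fin 4 → E3) => ∑ i, p.1 i • p.2 i :=
    continuous_finset_sum _ fun i _ =>
      ((continuous_apply i).comp continuous_fst).smul ((continuous_apply i).comp continuous_snd)
  have himg : (fun p : (Fin 4 → ℝ) × (Fin 4 → E3) => ∑ i, p.1 i • p.2 i) ''
      ((stdSimplex ℝ (Fin 4)) ×ˢ (Set.univ.pi fun _ : Fin 4 => S)) = convexHull ℝ S := by
    apply Subset.antisymm
    · rintro x ⟨⟨w, z⟩, ⟨hw, hz⟩, rfl⟩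
      exact (convex_convexHull ℝ S).sum_mem (fun i _ => hw.1 i) hw.2
        (fun i _ => subset_convexHull ℝ S (hz i (Set.mem_univ i)))
    · intro x hx
      obtain ⟨ι, hι, z, w, hzS, haff, hw0, hw1, hwz⟩ := eq_pos_convex_span_of_mem_convexHull hx
      letI := hι
      have hcard : Fintype.card ι ≤ 4 := by
        have h1 := haff.card_le_finrank_succ
        have h2 : Module.finrank ℝ ↥(vectorSpan ℝ (Set.range z)) ≤ Module.finrank ℝ E3 :=
          Submodule.finrank_le _
        have h3 : Module.finrank ℝ E3 = 3 := finrank_euclideanSpace_fin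
        omega
      obtain ⟨f⟩ : Nonempty (ι ↪ Fin 4) :=
        Function.Embedding.nonempty_of_card_le (by simpa using hcard)
      set w' : Fin 4 → ℝ := Function.extend f w (fun _ => (0:ℝ)) with hw'def
      set z' : Fin 4 → E3 := Function.extend f z (fun _ => s₀) with hz'def
      have hw'app : ∀ i, w' (f i) = w i := fun i => f.injective.extend_apply w _ i
      have hz'app : ∀ i, z' (f i) = z i := fun i => f.injective.extend_apply z _ i
      have hnot : ∀ j, j ∉ Finset.univ.image f → w' j = 0 := by
        intro j hj
        have : ¬∃ i, f i = j := by
          rintro ⟨i, rfl⟩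
          exact hj (Finset.mem_image.mpr ⟨i, Finset.mem_univ i, rfl⟩)
        simpa [hw'def] using Function.extend_apply' w (fun _ => (0:ℝ)) j this
      have hsumw : ∑ j, w' j = 1 := by
        rw [← Finset.sum_subset (Finset.subset_univ (Finset.univ.image f))
          (fun j _ hj => hnot j hj)]
        rw [Finset.sum_image (fun a _ b _ h => f.injective h)]
        simp only [hw'app]
        exact hw1
      have hsumwz : ∑ j, w' j • z' j = x := by
        rw [← Finset.sum_subset (Finset.subset_univ (Finset.univ.image f))
          (fun j _ hj => by rw [hnot j hj, zero_smul])]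
        rw [Finset.sum_image (fun a _ b _ h => f.injective h)]
        simp only [hw'app, hz'app]
        exact hwz
      refine ⟨(w', z'), ⟨⟨?_, hsumw⟩, ?_⟩, hsumwz⟩
      · intro j
        by_cases hj : ∃ i, f i = j
        · obtain ⟨i, rfl⟩ := hj
          show 0 ≤ w' (f i)
          rw [hw'app]; exact (hw0 i).le
        · show 0 ≤ w' j
          rw [hw'def, Function.extend_apply' w (fun _ => (0:ℝ)) j hj]
      · intro j _
        by_cases hj : ∃ i, f i = j
        · obtain ⟨i, rfl⟩ := hj
          show z' (f i) ∈ S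
          rw [hz'app]; exact hzS (Set.mem_range_self i)
        · show z' j ∈ S
          rw [hz'def, Function.extend_apply' z (fun _ => s₀) j hj]
          exact hs₀
  rw [← himg]
  exact hTcomp.image hcont


lemma extreme_not_mem_convexHull {C S : Set E3} (hCconv : Convex ℝ C) (hSC : S ⊆ C)
    {ξ : E3} (hξ : ξ ∈ Set.extremePoints ℝ C) (hξS : ξ ∉ S) : ξ ∉ convexHull ℝ S := by
  intro hmem
  apply hξS
  refine extremePoints_convexHull_subset (𝕜 := ℝ) ⟨hmem, fun x hx y hy hseg =>
    hξ.2 (convexHull_min hSC hCconv hx) (convexHull_min hSC hCconv hy) hseg⟩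

lemma exists_exposed_point_near {C : Set E3} (hcomp : IsCompact C) (hconv : Convex ℝ C)
    {ξ : E3} (hξ : ξ ∈ Set.extremePoints ℝ C) {ρ : ℝ} (hρ : 0 < ρ) :
    ∃ p u : E3, p ∈ C ∧ dist ξ p < ρ ∧ ‖u‖ = 1 ∧
      ∀ x ∈ C, x ≠ p → (inner ℝ (x - p) u : ℝ) < 0 := by
  have hξC : ξ ∈ C := hξ.1
  -- a bound on the diameter
  obtain ⟨x₀, -, hx₀⟩ := hcomp.exists_isMaxOn ⟨ξ, hξC⟩
    ((continuous_id.sub continuous_const).norm.continuousOn :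
      ContinuousOn (fun y : E3 => ‖y - ξ‖) C)
  set D : ℝ := ‖x₀ - ξ‖ with hDdef
  have hD : ∀ x ∈ C, ‖x - ξ‖ ≤ D := fun x hx => hx₀ hx
  -- find z such that all of C \ ball ξ ρ is strictly closer to z than ξ
  obtain ⟨z, hz1, hz2⟩ : ∃ z : E3, 1 ≤ ‖ξ - z‖ ∧
      ∀ x ∈ C \ ball ξ ρ, ‖x - z‖ < ‖ξ - z‖ := by
    rcases (C \ ball ξ ρ).eq_empty_or_nonempty with h | ⟨a₁, ha₁⟩
    · refine ⟨ξ - EuclideanSpace.single 0 (1:ℝ), by simp, ?_⟩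
      intro x hx; rw [h] at hx; exact absurd hx (notMem_empty x)
    · set S : Set E3 := C \ ball ξ ρ with hSdef
      have hScomp : IsCompact S := hcomp.diff isOpen_ball
      have hSC : S ⊆ C := diff_subset
      have hξS : ξ ∉ S := fun h => h.2 (mem_ball_self hρ)
      have hhull : IsCompact (convexHull ℝ S) := isCompact_convexHull_of_isCompact hScomp
      have hξhull : ξ ∉ convexHull ℝ S := extreme_not_mem_convexHull hconv hSC hξ hξS
      obtain ⟨φ, c, hφ1, hφ2⟩ :=
        geometric_hahn_banach_closed_point (convex_convexHull ℝ S) hhull.isClosed hξhull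
      set v : E3 := (InnerProductSpace.toDual ℝ E3).symm φ with hvdef
      have hv : ∀ y, (inner ℝ v y : ℝ) = φ y := fun y => InnerProductSpace.toDual_symm_apply
      have hvne : v ≠ 0 := by
        intro h0
        have h1 := hφ1 a₁ (subset_convexHull ℝ S ha₁)
        have h2 : φ a₁ = 0 := by rw [← hv a₁, h0]; simp
        have h3 : φ ξ = 0 := by rw [← hv ξ, h0]; simp
        linarith
      have hvpos : 0 < ‖v‖ := norm_pos_iff.mpr hvne
      set u₁ : E3 := ‖v‖⁻¹ • v with hu₁def
      have hu₁norm : ‖u₁‖ = 1 := by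
        rw [hu₁def, norm_smul, norm_inv, norm_norm, inv_mul_cancel₀ (ne_of_gt hvpos)]
      set g : ℝ := (φ ξ - c) / ‖v‖ with hgdef
      have hg : 0 < g := div_pos (by linarith) hvpos
      have hkey : ∀ x ∈ S, (inner ℝ (x - ξ) u₁ : ℝ) < -g := by
        intro x hx
        have h1 : φ x < c := hφ1 x (subset_convexHull ℝ S hx)
        have h2 : (inner ℝ (x - ξ) u₁ : ℝ) = ‖v‖⁻¹ * (φ x - φ ξ) := by
          rw [hu₁def, real_inner_smul_right, real_inner_comm, inner_sub_right, hv, hv]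
        rw [h2, hgdef]
        rw [div_eq_inv_mul]
        have := inv_pos.mpr hvpos
        nlinarith
      set t : ℝ := max 1 (D ^ 2 / (2 * g)) with htdef
      have ht1 : 1 ≤ t := le_max_left _ _
      have ht2 : D ^ 2 ≤ 2 * g * t := by
        have : D ^ 2 / (2 * g) ≤ t := le_max_right _ _
        calc D ^ 2 = (D ^ 2 / (2 * g)) * (2 * g) := by field_simp
        _ ≤ t * (2 * g) := by nlinarith
        _ = 2 * g * t := by ring
      refine ⟨ξ - t • u₁, ?_, ?_⟩
      · have : ξ - (ξ - t • u₁) = t • u₁ := by abel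
        rw [this, norm_smul, hu₁norm, mul_one]
        calc (1:ℝ) ≤ t := ht1
        _ ≤ |t| := le_abs_self t
        _ = ‖t‖ := rfl
      · intro x hx
        have hxi : (inner ℝ (x - ξ) u₁ : ℝ) < -g := hkey x hx
        have hxD : ‖x - ξ‖ ≤ D := hD x (hSC hx)
        have e1 : ξ - (ξ - t • u₁) = t • u₁ := by abel
        have e2 : x - (ξ - t • u₁) = (x - ξ) + t • u₁ := by abel
        rw [e1, e2]
        have hnt : ‖t • u₁‖ = t := by
          rw [norm_smul, hu₁norm, mul_one]
          exact abs_of_pos (by linarith)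
        rw [hnt]
        have hsq : ‖(x - ξ) + t • u₁‖ ^ 2 < t ^ 2 := by
          rw [norm_add_sq_real, hnt]
          have hin : (inner ℝ (x - ξ) (t • u₁) : ℝ) = t * inner ℝ (x - ξ) u₁ :=
            real_inner_smul_right _ _ _
          rw [hin]
          nlinarith [norm_nonneg (x - ξ)]
        nlinarith [norm_nonneg ((x - ξ) + t • u₁)]
  -- farthest point of C from z
  obtain ⟨p, hpC, hpmax⟩ := hcomp.exists_isMaxOn ⟨ξ, hξC⟩
    ((continuous_id.sub continuous_const).norm.continuousOn :
      ContinuousOn (fun y : E3 => ‖y - z‖) C)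
  have hpball : p ∈ ball ξ ρ := by
    by_contra h
    exact absurd (hpmax hξC) (not_le.mpr (hz2 p ⟨hpC, h⟩))
  have hpz : 1 ≤ ‖p - z‖ := le_trans hz1 (hpmax hξC)
  have hpzpos : (0:ℝ) < ‖p - z‖ := by linarith
  set q : E3 := p - z with hqdef
  refine ⟨p, ‖q‖⁻¹ • q, hpC, ?_, ?_, ?_⟩
  · rw [dist_comm]; exact mem_ball.mp hpball
  · rw [norm_smul, norm_inv, norm_norm, inv_mul_cancel₀ (ne_of_gt hpzpos)]
  · intro x hxC hxp
    have hq2 : (inner ℝ (x - p) q : ℝ) < 0 := by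
      by_contra h
      push_neg at h
      have hxz : ‖x - z‖ ≤ ‖q‖ := hpmax hxC
      have hd : x - z = (x - p) + q := by rw [hqdef]; abel
      have hxp2 : x - p = (x - z) - q := by rw [hqdef]; abel
      have hnorm : ‖x - p‖ ^ 2 = ‖x - z‖ ^ 2 - 2 * inner ℝ (x - z) q + ‖q‖ ^ 2 := by
        rw [hxp2, norm_sub_sq_real]
      have hiz : (inner ℝ (x - z) q : ℝ) = inner ℝ (x - p) q + ‖q‖ ^ 2 := by
        rw [hd, inner_add_left, real_inner_self_eq_norm_sq]
      have hle : ‖x - p‖ ^ 2 ≤ 0 := by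
        rw [hnorm, hiz]
        nlinarith [mul_self_le_mul_self (norm_nonneg (x - z)) hxz]
      have hz0 : x - p = 0 := by
        have h0 : ‖x - p‖ = 0 := le_antisymm (by nlinarith [norm_nonneg (x - p)]) (norm_nonneg _)
        exact norm_eq_zero.mp h0
      exact hxp (sub_eq_zero.mp hz0)
    have : (inner ℝ (x - p) (‖q‖⁻¹ • q) : ℝ) = ‖q‖⁻¹ * inner ℝ (x - p) q :=
      real_inner_smul_right _ _ _
    rw [this]
    exact mul_neg_of_pos_of_neg (inv_pos.mpr hpzpos) hq2

/-- Given `ξ ∈ Ext C \ closure(Sing C)` and a closed set `A ⊆ C` not containing `ξ`, for every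
`ε > 0` there is a point `O ∉ C` with `dist ξ O < ε` such that for every `x ∈ A` the open
segment `(O, x)` meets the interior of `C`. -/
theorem stmt10 (C : Set E3) (hC : IsConvexBody C)
    (ξ : E3) (hξ : ξ ∈ Set.extremePoints ℝ C \ closure (SingPts C))
    (A : Set E3) (hAclosed : IsClosed A) (hAC : A ⊆ C) (hξA : ξ ∉ A)
    (ε : ℝ) (hε : 0 < ε) :
    ∃ O : E3, O ∉ C ∧ dist ξ O < ε ∧
      ∀ x ∈ A, (openSegment ℝ O x ∩ interior C).Nonempty := by
  classical
  obtain ⟨hcomp, hconv, hint⟩ := hC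
  obtain ⟨hξext, hξsing⟩ := hξ
  obtain ⟨rA, hrA, hrAball⟩ : ∃ r > 0, ball ξ r ⊆ Aᶜ :=
    Metric.isOpen_iff.mp hAclosed.isOpen_compl ξ hξA
  obtain ⟨r₀, hr₀, hr₀ball⟩ : ∃ r > 0, ball ξ r ⊆ (closure (SingPts C))ᶜ :=
    Metric.isOpen_iff.mp isClosed_closure.isOpen_compl ξ hξsing
  set ρ : ℝ := min (min rA r₀) (ε / 2) with hρdef
  have hρpos : 0 < ρ := lt_min (lt_min hrA hr₀) (by linarith)
  obtain ⟨p, u, hpC, hpdist, hu1, hexp⟩ := exists_exposed_point_near hcomp hconv hξext hρpos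
  have hpball : ∀ {r : ℝ}, ρ ≤ r → p ∈ ball ξ r := fun h => mem_ball'.mpr (lt_of_lt_of_le hpdist h)
  have hpA : p ∉ A := fun hmem =>
    (hrAball (hpball ((min_le_left _ _).trans (min_le_left _ _)))) hmem
  have hpsing : p ∉ SingPts C := fun hs =>
    (hr₀ball (hpball ((min_le_left _ _).trans (min_le_right _ _)))) (subset_closure hs)
  have hpd2 : dist ξ p < ε / 2 := lt_of_lt_of_le hpdist (min_le_right _ _)
  have hune : u ≠ 0 := fun h0 => by rw [h0, norm_zero] at hu1; norm_num at hu1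
  have hnotint : p ∉ interior C := by
    intro hpint
    rcases Metric.isOpen_iff.mp isOpen_interior p hpint with ⟨δ, hδ, hball⟩
    have hmem : p + (δ / 2) • u ∈ C := by
      apply interior_subset (hball _)
      rw [mem_ball, dist_eq_norm, add_sub_cancel_left, norm_smul, hu1, mul_one,
        Real.norm_eq_abs, abs_of_pos (by linarith)]
      linarith
    have hne : p + (δ / 2) • u ≠ p := fun h =>
      smul_ne_zero (by positivity : (δ/2 : ℝ) ≠ 0) hune (by rwa [add_eq_left] at h)
    have hlt := hexp _ hmem hne
    rw [add_sub_cancel_left, real_inner_smul_left, real_inner_self_eq_norm_mul_norm, hu1] at hlt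
    nlinarith
  have hpfront : p ∈ frontier C := ⟨subset_closure hpC, hnotint⟩
  have hnormalu : ∀ x ∈ C, (inner ℝ (x - p) u : ℝ) ≤ 0 := by
    intro x hx
    rcases eq_or_ne x p with rfl | h
    · simp
    · exact (hexp x hx h).le
  -- the compact set of pairs (point of A, outward unit normal there)
  set K : Set (E3 × E3) :=
    {q | q.1 ∈ A ∧ ‖q.2‖ = 1 ∧ ∀ y ∈ C, (inner ℝ (y - q.1) q.2 : ℝ) ≤ 0} with hKdef
  have hAcomp : IsCompact A := hcomp.of_isClosed_subset hAclosed hAC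
  have hKclosed : IsClosed K := by
    have : K = (A ×ˢ (sphere (0:E3) 1)) ∩ ⋂ y ∈ C, {q : E3 × E3 | (inner ℝ (y - q.1) q.2 : ℝ) ≤ 0} := by
      ext q
      simp only [hKdef, mem_setOf_eq, mem_inter_iff, mem_prod, mem_sphere_iff_norm, sub_zero,
        mem_iInter]
      tauto
    rw [this]
    refine IsClosed.inter (hAclosed.prod isClosed_sphere) (isClosed_biInter fun y _ => ?_)
    exact isClosed_le ((continuous_const.sub continuous_fst).inner continuous_snd) continuous_const
  have hKcomp : IsCompact K :=
    (hAcomp.prod (isCompact_sphere 0 1)).of_isClosed_subset hKclosed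
      (fun q hq => ⟨hq.1, by simpa [mem_sphere_iff_norm] using hq.2.1⟩)
  -- uniform gap
  obtain ⟨η, hηpos, hηK⟩ : ∃ η > 0, ∀ q ∈ K, (inner ℝ (p - q.1) q.2 : ℝ) ≤ -η := by
    rcases K.eq_empty_or_nonempty with hKe | hKne
    · exact ⟨1, one_pos, by simp [hKe]⟩
    · obtain ⟨q₀, hq₀K, hq₀max⟩ := hKcomp.exists_isMaxOn hKne
        (((continuous_const.sub continuous_fst).inner continuous_snd).continuousOn :
          ContinuousOn (fun q : E3 × E3 => (inner ℝ (p - q.1) q.2 : ℝ)) K)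
      have hle0 : (inner ℝ (p - q₀.1) q₀.2 : ℝ) ≤ 0 := hq₀K.2.2 p hpC
      have hlt0 : (inner ℝ (p - q₀.1) q₀.2 : ℝ) < 0 := by
        rcases lt_or_eq_of_le hle0 with h | h
        · exact h
        · exfalso
          have hm₀ : IsOutwardNormal C p q₀.2 := by
            refine ⟨hq₀K.2.1, fun x hx => ?_⟩
            have h1 := hq₀K.2.2 x hx
            have e : x - p = (x - q₀.1) - (p - q₀.1) := by abel
            rw [e, inner_sub_left]
            linarith [h.symm]
          have hequ : q₀.2 = u := by
            by_contra hne
            exact hpsing ⟨hpfront, q₀.2, u, hne, hm₀, ⟨hu1, hnormalu⟩⟩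
          have hq1A : q₀.1 ∈ A := hq₀K.1
          have hq1ne : q₀.1 ≠ p := fun he => hpA (he ▸ hq1A)
          have hlt := hexp q₀.1 (hAC hq1A) hq1ne
          rw [← neg_sub p q₀.1, inner_neg_left] at hlt
          rw [hequ] at h
          linarith [h.symm]
      refine ⟨-(inner ℝ (p - q₀.1) q₀.2 : ℝ), by linarith, fun q hq => ?_⟩
      have := hq₀max hq
      simpa using this
  -- the point O
  set τ : ℝ := min (η / 2) (ε / 4) with hτdef
  have hτpos : 0 < τ := lt_min (by linarith) (by linarith)
  set O : E3 := p + τ • u with hOdef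
  have hOne : O ≠ p := fun h =>
    smul_ne_zero (ne_of_gt hτpos) hune (by rwa [hOdef, add_eq_left] at h)
  have hOC : O ∉ C := by
    intro hOC
    have hlt := hexp O hOC hOne
    rw [hOdef, add_sub_cancel_left, real_inner_smul_left, real_inner_self_eq_norm_mul_norm,
      hu1] at hlt
    nlinarith
  have hdistO : dist ξ O < ε := by
    have h1 : dist p O = τ := by
      rw [hOdef, dist_eq_norm]
      rw [show p - (p + τ • u) = -(τ • u) by abel, norm_neg, norm_smul, hu1, mul_one,
        Real.norm_eq_abs, abs_of_pos hτpos]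
    calc dist ξ O ≤ dist ξ p + dist p O := dist_triangle _ _ _
    _ < ε / 2 + τ := by linarith
    _ ≤ ε / 2 + ε / 4 := by linarith [min_le_right (η/2) (ε/4)]
    _ < ε := by linarith
  refine ⟨O, hOC, hdistO, ?_⟩
  intro x hxA
  by_contra hempty
  have hdisj : Disjoint (interior C) (openSegment ℝ O x) := by
    rw [Set.disjoint_iff_inter_eq_empty, inter_comm]
    exact Set.not_nonempty_iff_eq_empty.mp hempty
  obtain ⟨φ, c, hφ1, hφ2⟩ :=
    geometric_hahn_banach_open hconv.interior isOpen_interior (convex_openSegment O x) hdisj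
  obtain ⟨a₀, ha₀⟩ := hint
  set v : E3 := (InnerProductSpace.toDual ℝ E3).symm φ with hvdef
  have hv : ∀ y, (inner ℝ v y : ℝ) = φ y := fun y => InnerProductSpace.toDual_symm_apply
  have hmid : (1/2 : ℝ) • O + (1/2 : ℝ) • x ∈ openSegment ℝ O x :=
    ⟨1/2, 1/2, by norm_num, by norm_num, by norm_num, rfl⟩
  have hvne : v ≠ 0 := by
    intro h0
    have h1 := hφ1 a₀ ha₀
    have h2 := hφ2 _ hmid
    have hz : ∀ y, φ y = 0 := fun y => by rw [← hv y, h0]; simp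
    rw [hz] at h1; rw [hz] at h2
    linarith
  have hvpos : 0 < ‖v‖ := norm_pos_iff.mpr hvne
  -- C lies on the ≤ c side
  have hCle : ∀ y ∈ C, φ y ≤ c := by
    intro y hy
    by_contra hyc
    push_neg at hyc
    have ha₀lt : φ a₀ < c := hφ1 a₀ ha₀
    have hden : 0 < φ y - φ a₀ := by linarith
    set t₀ : ℝ := (φ y - c) / (2 * (φ y - φ a₀)) with ht₀def
    have ht₀pos : 0 < t₀ := div_pos (by linarith) (by linarith)
    have ht₀le : t₀ ≤ 1 := by
      rw [ht₀def, div_le_one (by linarith)]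
      linarith
    have hmem := hconv.add_smul_sub_mem_interior hy ha₀ ⟨ht₀pos, ht₀le⟩
    have hlt := hφ1 _ hmem
    have heval : φ (y + t₀ • (a₀ - y)) = φ y + t₀ * (φ a₀ - φ y) := by
      rw [map_add, map_smul, map_sub, smul_eq_mul]
    rw [heval] at hlt
    have ht₀mul : t₀ * (φ y - φ a₀) = (φ y - c) / 2 := by
      rw [ht₀def]; field_simp
    nlinarith
  have hsegsub : segment ℝ O x ⊆ {b | c ≤ φ b} := by
    rw [← closure_openSegment]
    exact closure_minimal (fun b hb => hφ2 b hb)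
      (isClosed_le continuous_const φ.continuous)
  have hφO : c ≤ φ O := hsegsub (left_mem_segment ℝ O x)
  have hφx : φ x = c := le_antisymm (hCle x (hAC hxA)) (hsegsub (right_mem_segment ℝ O x))
  set m : E3 := ‖v‖⁻¹ • v with hmdef
  have hmnorm : ‖m‖ = 1 := by
    rw [hmdef, norm_smul, norm_inv, norm_norm, inv_mul_cancel₀ (ne_of_gt hvpos)]
  have hinner_eq : ∀ a b : E3, (inner ℝ (a - b) m : ℝ) = ‖v‖⁻¹ * (φ a - φ b) := by
    intro a b
    rw [hmdef, real_inner_smul_right, real_inner_comm, inner_sub_right, hv, hv]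
  have hmK : (x, m) ∈ K := by
    refine ⟨hxA, hmnorm, fun y hy => ?_⟩
    rw [hinner_eq y x, hφx]
    have h1 : φ y - c ≤ 0 := by linarith [hCle y hy]
    have h2 : (0:ℝ) ≤ ‖v‖⁻¹ := inv_nonneg.mpr (norm_nonneg v)
    exact mul_nonpos_iff.mpr (Or.inl ⟨h2, h1⟩)
  have hKb : (inner ℝ (p - x) m : ℝ) ≤ -η := hηK (x, m) hmK
  have hOmge : (0:ℝ) ≤ inner ℝ (O - x) m := by
    rw [hinner_eq O x, hφx]
    have h2 : (0:ℝ) ≤ ‖v‖⁻¹ := inv_nonneg.mpr (norm_nonneg v)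
    have h1 : (0:ℝ) ≤ φ O - c := by linarith
    positivity
  have hcombine : (inner ℝ (O - x) m : ℝ) = inner ℝ (p - x) m + τ * inner ℝ u m := by
    rw [show O - x = (p - x) + τ • u by rw [hOdef]; abel, inner_add_left, real_inner_smul_left]
  have hum : (inner ℝ u m : ℝ) ≤ 1 := by
    have := real_inner_le_norm u m
    rwa [hu1, hmnorm, one_mul] at this
  have hτη : τ ≤ η / 2 := min_le_left _ _
  have : (inner ℝ (O - x) m : ℝ) < 0 := by
    rw [hcombine]
    have h3 : τ * inner ℝ u m ≤ τ * 1 := mul_le_mul_of_nonneg_left hum hτpos.le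
    nlinarith
  linarith
end
end

section
/- Let C ⊂ ℝ³ be a convex body, let (O_i)_{i∈I} be a family of points lying outside C such that for all i ≠ j the open segment (O_i, O_j) intersects C, and let (s_i)_{i∈I} be a family of numbers in [0, 1]. For each i set C_i(s_i) = ⋃_{√(1−s_i) ≤ λ ≤ 1} (λ·C + (1−λ)·O_i), where λ·C + (1−λ)·O_i = {λx + (1−λ)O_i : x ∈ C}. Then the union ⋃_{i∈I} C_i(s_i) is a convex set. -/
open Set Metric

noncomputable section

lemma convex3 {C : Set E3} (hC : Convex ℝ C) {x y z : E3}
    (hx : x ∈ C) (hy : y ∈ C) (hz : z ∈ C) {a b c : ℝ}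
    (ha : 0 ≤ a) (hb : 0 ≤ b) (hc : 0 ≤ c) (habc : a + b + c = 1) :
    a • x + b • y + c • z ∈ C := by
  by_cases hab : a + b = 0
  · have ha0 : a = 0 := by linarith
    have hb0 : b = 0 := by linarith
    have hc1 : c = 1 := by linarith
    simpa [ha0, hb0, hc1] using hz
  · have hab' : 0 < a + b := lt_of_le_of_ne (by linarith) (Ne.symm hab)
    have h1 : (a/(a+b)) • x + (b/(a+b)) • y ∈ C :=
      hC hx hy (by positivity) (by positivity) (by field_simp)
    have h2 := hC h1 hz (le_of_lt hab') hc habc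
    convert h2 using 1
    match_scalars <;> field_simp

lemma mem_layer {C : Set E3} (hC : Convex ℝ C) (hne : C.Nonempty)
    {O : E3} {a : ℝ} {c₁ c₂ c₃ : ℝ} (h₁ : 0 ≤ c₁) (h₂ : 0 ≤ c₂) (h₃ : 0 ≤ c₃)
    {x y z : E3} (hx : x ∈ C) (hy : y ∈ C) (hz : z ∈ C)
    (hsum : a ≤ c₁ + c₂ + c₃) (hsum1 : c₁ + c₂ + c₃ ≤ 1) :
    c₁ • x + c₂ • y + c₃ • z + (1 - (c₁ + c₂ + c₃)) • O ∈
      ⋃ l ∈ Set.Icc a 1, (fun w => l • w + (1 - l) • O) '' C := by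
  set l := c₁ + c₂ + c₃ with hl
  have hl0 : 0 ≤ l := by positivity
  rcases eq_or_lt_of_le hl0 with h0 | h0
  · have hc1 : c₁ = 0 := by linarith
    have hc2 : c₂ = 0 := by linarith
    have hc3 : c₃ = 0 := by linarith
    obtain ⟨w, hw⟩ := hne
    refine mem_biUnion (show (0:ℝ) ∈ Set.Icc a 1 from ⟨by linarith, by linarith⟩) ⟨w, hw, ?_⟩
    simp [hc1, hc2, hc3, hl]
  · refine mem_biUnion (show l ∈ Set.Icc a 1 from ⟨hsum, hsum1⟩)
      ⟨(c₁/l) • x + (c₂/l) • y + (c₃/l) • z, ?_, ?_⟩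
    · exact convex3 hC hx hy hz (by positivity) (by positivity) (by positivity)
        (by field_simp; exact hl.symm)
    · show l • _ + (1 - l) • O = _
      match_scalars <;> field_simp

/-- Let `(O_i)` be points outside the convex body `C` such that each open segment `(O_i, O_j)`
(for `i ≠ j`) meets `C`, and let `s_i ∈ [0,1]`. Then the union of the sets
`C_i(s_i) = ⋃_{√(1−s_i) ≤ λ ≤ 1} (λ·C + (1−λ)·O_i)` is convex. -/
theorem stmt12 {ι : Type} (C : Set E3) (hC : IsConvexBody C)
    (O : ι → E3) (hO : ∀ i, O i ∉ C)
    (hseg : ∀ i j, i ≠ j → (openSegment ℝ (O i) (O j) ∩ C).Nonempty)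
    (s : ι → ℝ) (hs : ∀ i, s i ∈ Set.Icc (0 : ℝ) 1) :
    Convex ℝ (⋃ i, ⋃ l ∈ Set.Icc (Real.sqrt (1 - s i)) 1,
      (fun x => l • x + (1 - l) • O i) '' C) := by
  obtain ⟨-, hconv, hint⟩ := hC
  have hne : C.Nonempty := hint.mono interior_subset
  have ha0 : ∀ i, 0 ≤ Real.sqrt (1 - s i) := fun i => Real.sqrt_nonneg _
  have ha1 : ∀ i, Real.sqrt (1 - s i) ≤ 1 := fun i =>
    Real.sqrt_le_one.2 (by linarith [(hs i).1])
  intro p hp q hq u v hu hv huv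
  obtain rfl : v = 1 - u := by linarith
  simp only [mem_iUnion, mem_image, Set.mem_Icc] at hp hq
  obtain ⟨i, lam, ⟨hla, hl1⟩, x, hx, rfl⟩ := hp
  obtain ⟨j, mu, ⟨hma, hm1⟩, y, hy, rfl⟩ := hq
  have hla0 : 0 ≤ lam := (ha0 i).trans hla
  have hma0 : 0 ≤ mu := (ha0 j).trans hma
  rw [mem_iUnion]
  by_cases hij : i = j
  · subst hij
    refine ⟨i, ?_⟩
    have key := mem_layer (O := O i) (c₁ := u * lam) (c₂ := (1-u) * mu) (c₃ := 0)
      hconv hne (mul_nonneg hu hla0) (mul_nonneg hv hma0) le_rfl hx hy hx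
      (a := Real.sqrt (1 - s i))
      (by nlinarith [mul_le_mul_of_nonneg_left hla hu,
        mul_le_mul_of_nonneg_left hma hv])
      (by nlinarith)
    convert key using 1
    module
  · obtain ⟨c, hcseg, hcC⟩ := hseg i j hij
    obtain ⟨σ, τ, hσ, hτ, hστ, hc⟩ := hcseg
    obtain rfl : τ = 1 - σ := by linarith
    by_cases hγ : (1-u) * (1-mu) * σ ≤ u * (1-lam) * (1-σ)
    · -- stay with center O i
      set c₃ : ℝ := (1-u) * (1-mu) / (1-σ) with hc₃def
      have hc₃ : c₃ * (1-σ) = (1-u) * (1-mu) := by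
        rw [hc₃def]; exact div_mul_cancel₀ _ hτ.ne'
      have hc₃0 : 0 ≤ c₃ := by
        apply div_nonneg (by nlinarith) (by linarith)
      refine ⟨i, ?_⟩
      have key := mem_layer (O := O i) (c₁ := u * lam) (c₂ := (1-u) * mu) (c₃ := c₃)
        hconv hne (mul_nonneg hu hla0) (mul_nonneg hv hma0) hc₃0 hx hy hcC
        (a := Real.sqrt (1 - s i))
        (by nlinarith [ha1 i, mul_le_mul_of_nonneg_left hla hu,
          mul_le_mul_of_nonneg_left hma hv, mul_nonneg hc₃0 hσ.le])
        (by nlinarith)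
      convert key using 1
      rw [← hc]
      linear_combination (norm := module) hc₃ • (O i - O j)
    · -- use center O j
      push_neg at hγ
      set c₃ : ℝ := u * (1-lam) / σ with hc₃def
      have hc₃ : c₃ * σ = u * (1-lam) := by
        rw [hc₃def]; exact div_mul_cancel₀ _ hσ.ne'
      have hc₃0 : 0 ≤ c₃ := by
        apply div_nonneg (by nlinarith) hσ.le
      refine ⟨j, ?_⟩
      have key := mem_layer (O := O j) (c₁ := u * lam) (c₂ := (1-u) * mu) (c₃ := c₃)
        hconv hne (mul_nonneg hu hla0) (mul_nonneg hv hma0) hc₃0 hx hy hcC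
        (a := Real.sqrt (1 - s j))
        (by nlinarith [ha1 j, mul_le_mul_of_nonneg_left hla hu,
          mul_le_mul_of_nonneg_left hma hv, mul_nonneg hc₃0 (by linarith : (0:ℝ) ≤ 1-σ)])
        (by nlinarith)
      convert key using 1
      rw [← hc]
      linear_combination (norm := module) hc₃ • (O j - O i)
end
end
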